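/- arXiv:1312.0158 — 7 statements merged into one kernel-verified Lean document; each statement's English description precedes it below -/
import Mathlib

section
/- For any collection Φ = (φ₁, …, φ_N) of vectors in ℂ^M, the intensity measurement map 𝒜_Φ is NOT injective on ℂ^M/S¹ if and only if there exists a nonzero Hermitian matrix Q ∈ ℂ^{M×M} with rank(Q) ≤ 2 and φₙ* Q φₙ = 0 for every 1 ≤ n ≤ N (where φₙ* denotes the conjugate-transpose of φₙ). -/
open Matrix Complex MvPolynomial Finset

/-- The intensity measurements of `x` with respect to the frame `Φ`:
the `n`-th measurement is `|⟨x, φₙ⟩|²` where `⟨x, y⟩ = ∑ m, x m * conj (y m)`. -/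
noncomputable def intensity {M N : ℕ} (Φ : Fin N → Fin M → ℂ) (x : Fin M → ℂ) : Fin N → ℝ :=
  fun n => ‖∑ m, x m * (starRingEnd ℂ) (Φ n m)‖ ^ 2

/-- `𝒜_Φ` is injective on `ℂ^M / S¹`. -/
noncomputable def PhaseInjective {M N : ℕ} (Φ : Fin N → Fin M → ℂ) : Prop :=
  ∀ x y : Fin M → ℂ, intensity Φ x = intensity Φ y →
    ∃ θ : ℝ, x = fun m => Complex.exp (θ * Complex.I) * y m

/-- The frame `Φ = U + iV` with vectors `φₙ = uₙ + i vₙ`, where `uₙ, vₙ` are the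
`n`-th columns of `U` and `V`. -/
noncomputable def frameOf {M N : ℕ} (U V : Matrix (Fin M) (Fin N) ℝ) : Fin N → Fin M → ℂ :=
  fun n m => (U m n : ℂ) + (V m n : ℂ) * Complex.I

lemma phase_of_outer_eq {M : ℕ} (x y : Fin M → ℂ)
    (h : ∀ m m', x m * (starRingEnd ℂ) (x m') = y m * (starRingEnd ℂ) (y m')) :
    ∃ θ : ℝ, x = fun m => Complex.exp (θ * Complex.I) * y m := by
  by_cases hy : y = 0
  · refine ⟨0, ?_⟩
    subst hy
    funext m
    have := h m m
    simp only [Pi.zero_apply, mul_zero, zero_mul, Complex.mul_conj] at this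
    simp only [Pi.zero_apply, mul_zero]
    exact_mod_cast Complex.normSq_eq_zero.mp (by exact_mod_cast this)
  · obtain ⟨m₀, hm₀⟩ := Function.ne_iff.mp hy
    simp only [Pi.zero_apply] at hm₀
    have hx0 : x m₀ ≠ 0 := by
      intro h0
      have := h m₀ m₀
      rw [h0, zero_mul, Complex.mul_conj] at this
      exact hm₀ (Complex.normSq_eq_zero.mp (by exact_mod_cast this.symm))
    have h2 : Complex.normSq (x m₀) = Complex.normSq (y m₀) := by
      have := h m₀ m₀
      rw [Complex.mul_conj, Complex.mul_conj] at this
      exact_mod_cast this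
    set c : ℂ := x m₀ / y m₀ with hc
    have habs : ‖c‖ = 1 := by
      rw [hc, norm_div, Complex.norm_def, Complex.norm_def, h2, div_self]
      exact (Real.sqrt_pos.mpr (Complex.normSq_pos.mpr hm₀)).ne'
    have hexp : Complex.exp ((c.arg : ℂ) * Complex.I) = c := by
      conv_rhs => rw [← Complex.norm_mul_exp_arg_mul_I c]
      rw [habs, Complex.ofReal_one, one_mul]
    refine ⟨c.arg, ?_⟩
    funext m
    rw [hexp]
    have key := h m m₀
    have hconjx : (starRingEnd ℂ) (x m₀) ≠ 0 := by simpa using hx0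
    have hconjy : (starRingEnd ℂ) (y m₀) ≠ 0 := by simpa using hm₀
    -- x m = c * y m
    have : x m = (x m * (starRingEnd ℂ) (x m₀)) / (starRingEnd ℂ) (x m₀) := by
      field_simp
    rw [this, key, hc]
    have hcc : (starRingEnd ℂ) (x m₀) * x m₀ = (starRingEnd ℂ) (y m₀) * y m₀ := by
      have hx := Complex.mul_conj (x m₀)
      have hyy := Complex.mul_conj (y m₀)
      rw [mul_comm] at hx hyy
      rw [hx, hyy, h2]
    field_simp
    linear_combination (-(y m)) * hcc

lemma my_rank_add_le {M : ℕ} (A B : Matrix (Fin M) (Fin M) ℂ) :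
    (A + B).rank ≤ A.rank + B.rank := by
  simp only [Matrix.rank]
  have h1 : LinearMap.range (Matrix.mulVecLin (A + B)) ≤
      LinearMap.range A.mulVecLin ⊔ LinearMap.range B.mulVecLin := by
    rw [Matrix.mulVecLin_add]
    rintro z ⟨v, rfl⟩
    exact Submodule.mem_sup.mpr ⟨A.mulVecLin v, ⟨v, rfl⟩, B.mulVecLin v, ⟨v, rfl⟩, rfl⟩
  exact le_trans (Submodule.finrank_mono h1)
    (Submodule.finrank_add_le_finrank_add_finrank _ _)

lemma my_rank_vecMulVec_le {M : ℕ} (u v : Fin M → ℂ) :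
    (Matrix.vecMulVec u v).rank ≤ 1 := by
  rw [Matrix.vecMulVec_eq (Fin 1)]
  refine le_trans (Matrix.rank_mul_le_left _ _) ?_
  exact (Matrix.rank_le_card_width (Matrix.replicateCol (Fin 1) u)).trans (by simp)

lemma quad_form_outer {M : ℕ} (x φ : Fin M → ℂ) :
    (fun m => (starRingEnd ℂ) (φ m)) ⬝ᵥ (Matrix.vecMulVec x (star x)) *ᵥ φ
      = Complex.normSq (∑ m, x m * (starRingEnd ℂ) (φ m)) := by
  have h1 : (fun m => (starRingEnd ℂ) (φ m)) ⬝ᵥ (Matrix.vecMulVec x (star x)) *ᵥ φ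
      = (∑ m, x m * (starRingEnd ℂ) (φ m)) * (∑ m, (starRingEnd ℂ) (x m) * φ m) := by
    simp only [dotProduct, Matrix.mulVec, dotProduct, Matrix.vecMulVec_apply,
      Pi.star_apply, RCLike.star_def]
    rw [Finset.sum_mul_sum]
    apply Finset.sum_congr rfl; intro m _
    rw [Finset.mul_sum]
    apply Finset.sum_congr rfl; intro m' _; ring
  rw [h1, ← Complex.mul_conj, map_sum]
  congr 1
  apply Finset.sum_congr rfl; intro m _
  rw [_root_.map_mul, Complex.conj_conj]

lemma diag_quad_form {M : ℕ} (Q : Matrix (Fin M) (Fin M) ℂ) (hH : Q.IsHermitian)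
    (φ : Fin M → ℂ)
    (h0 : (fun m => (starRingEnd ℂ) (φ m)) ⬝ᵥ Q *ᵥ φ = 0) :
    ∑ k, hH.eigenvalues k *
      Complex.normSq ((star (hH.eigenvectorUnitary : Matrix (Fin M) (Fin M) ℂ) *ᵥ φ) k) = 0 := by
  set U : Matrix (Fin M) (Fin M) ℂ := (hH.eigenvectorUnitary : Matrix (Fin M) (Fin M) ℂ) with hU
  set w : Fin M → ℂ := star U *ᵥ φ with hw
  have hsφ : (fun m => (starRingEnd ℂ) (φ m)) = star φ := rfl
  rw [hsφ] at h0
  have hexp : star φ ⬝ᵥ Q *ᵥ φ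
      = star w ⬝ᵥ (Matrix.diagonal (RCLike.ofReal ∘ hH.eigenvalues) *ᵥ w) := by
    conv_lhs => rw [hH.spectral_theorem, Unitary.conjStarAlgAut_apply]
    rw [← Matrix.mulVec_mulVec, ← Matrix.mulVec_mulVec, Matrix.dotProduct_mulVec]
    congr 1
    rw [hw, Matrix.star_mulVec, ← Matrix.star_eq_conjTranspose, star_star]
  rw [hexp] at h0
  have h1 : star w ⬝ᵥ (Matrix.diagonal (RCLike.ofReal ∘ hH.eigenvalues) *ᵥ w)
      = ((∑ k, hH.eigenvalues k * Complex.normSq (w k) : ℝ) : ℂ) := by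
    rw [dotProduct, Complex.ofReal_sum]
    apply Finset.sum_congr rfl
    intro k _
    rw [Matrix.mulVec_diagonal]
    simp only [Pi.star_apply, Function.comp_apply, RCLike.star_def, Complex.ofReal_mul]
    rw [show (starRingEnd ℂ) (w k) * ((RCLike.ofReal (hH.eigenvalues k) : ℂ) * w k)
        = (RCLike.ofReal (hH.eigenvalues k) : ℂ) * (w k * (starRingEnd ℂ) (w k)) by ring,
      Complex.mul_conj]
    rfl
  rw [h1] at h0
  exact_mod_cast h0

lemma intensity_scaled_col {M N : ℕ} (Φ : Fin N → Fin M → ℂ) (U : Matrix (Fin M) (Fin M) ℂ)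
    (i : Fin M) (r : ℝ) (n : Fin N) :
    intensity Φ (fun m => (r : ℂ) * U m i) n = r ^ 2 * Complex.normSq ((star U *ᵥ Φ n) i) := by
  have hsum : ∑ m, ((r : ℂ) * U m i) * (starRingEnd ℂ) (Φ n m)
      = (r : ℂ) * (starRingEnd ℂ) ((star U *ᵥ Φ n) i) := by
    rw [Matrix.mulVec, dotProduct, map_sum, Finset.mul_sum]
    apply Finset.sum_congr rfl
    intro m _
    simp only [Matrix.star_apply, RCLike.star_def, _root_.map_mul, Complex.conj_conj]
    ring
  rw [intensity, hsum, ← Complex.sq_norm]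
  rw [norm_mul, mul_pow, Complex.sq_norm, Complex.sq_norm, Complex.normSq_conj,
    Complex.normSq_ofReal]
  rw [Complex.sq_norm]
  ring

lemma backward_dir {M N : ℕ} (Φ : Fin N → Fin M → ℂ) (Q : Matrix (Fin M) (Fin M) ℂ)
    (hQ0 : Q ≠ 0) (hH : Q.IsHermitian) (hrk : Q.rank ≤ 2)
    (hqf : ∀ n : Fin N, (fun m => (starRingEnd ℂ) (Φ n m)) ⬝ᵥ Q *ᵥ Φ n = 0) :
    ¬ PhaseInjective Φ := by
  set U : Matrix (Fin M) (Fin M) ℂ := (hH.eigenvectorUnitary : Matrix (Fin M) (Fin M) ℂ) with hU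
  set lam := hH.eigenvalues with hlam
  have hUU : star U * U = 1 := Unitary.coe_star_mul_self hH.eigenvectorUnitary
  have horth : ∀ i j, ∑ m, (starRingEnd ℂ) (U m i) * U m j = if i = j then 1 else 0 := by
    intro i j
    have h1 := congrFun (congrFun hUU i) j
    rw [Matrix.mul_apply] at h1
    simp only [Matrix.star_apply, RCLike.star_def] at h1
    rw [h1, Matrix.one_apply]
  have factA : ∀ n, ∑ k, lam k * Complex.normSq ((star U *ᵥ Φ n) k) = 0 :=
    fun n => diag_quad_form Q hH (Φ n) (hqf n)
  have hcol_ne : ∀ i, ∃ m, U m i ≠ 0 := by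
    intro i
    by_contra hA
    push_neg at hA
    have h1 := horth i i
    simp only [hA, map_zero, zero_mul, mul_zero, Finset.sum_const_zero, if_pos rfl] at h1
    exact zero_ne_one h1
  have hcard : Fintype.card {k // lam k ≠ 0} ≤ 2 := hH.rank_eq_card_non_zero_eigs ▸ hrk
  have hlamne : ∃ i, lam i ≠ 0 := by
    by_contra hA
    push_neg at hA
    apply hQ0
    rw [hH.spectral_theorem]
    have h2 : (RCLike.ofReal ∘ lam : Fin M → ℂ) = 0 := funext fun i => by simp [hA i]
    rw [show Matrix.diagonal (RCLike.ofReal ∘ hH.eigenvalues : Fin M → ℂ) = 0 by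
        rw [← hlam, h2]; exact Matrix.diagonal_zero]
    rw [map_zero]
  intro hPI
  by_cases hpos : ∃ i, 0 < lam i
  · by_cases hneg : ∃ j, lam j < 0
    · -- Case A: one positive, one negative eigenvalue
      obtain ⟨i, hi⟩ := hpos
      obtain ⟨j, hj⟩ := hneg
      have hij : i ≠ j := fun h => by rw [h] at hi; linarith
      have hzero : ∀ k, k ≠ i → k ≠ j → lam k = 0 := by
        intro k hki hkj
        by_contra hk
        classical
        have hsub : ({i, j, k} : Finset (Fin M)) ⊆ Finset.univ.filter (fun l => lam l ≠ 0) := by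
          intro l hl
          simp only [Finset.mem_insert, Finset.mem_singleton] at hl
          rcases hl with rfl | rfl | rfl <;>
            simp [Finset.mem_filter, hi.ne', hj.ne, hk]
        have h3 : ({i, j, k} : Finset (Fin M)).card = 3 := by
          rw [Finset.card_insert_of_notMem (by simp [hij, Ne.symm hki]),
            Finset.card_insert_of_notMem (by simp [Ne.symm hkj]), Finset.card_singleton]
        have hle := Finset.card_le_card hsub
        rw [h3, ← Fintype.card_subtype] at hle
        omega
      set x := fun m => ((Real.sqrt (lam i) : ℝ) : ℂ) * U m i with hx
      set y := fun m => ((Real.sqrt (-lam j) : ℝ) : ℂ) * U m j with hy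
      have hint : intensity Φ x = intensity Φ y := by
        funext n
        rw [hx, hy, intensity_scaled_col, intensity_scaled_col,
          Real.sq_sqrt hi.le, Real.sq_sqrt (by linarith : (0:ℝ) ≤ -lam j)]
        have hA := factA n
        have hsum2 : ∑ k ∈ ({i, j} : Finset (Fin M)), lam k * Complex.normSq ((star U *ᵥ Φ n) k)
            = ∑ k, lam k * Complex.normSq ((star U *ᵥ Φ n) k) := by
          apply Finset.sum_subset (Finset.subset_univ _)
          intro k _ hk
          simp only [Finset.mem_insert, Finset.mem_singleton, not_or] at hk
          rw [hzero k hk.1 hk.2, zero_mul]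
        rw [Finset.sum_pair hij, hA] at hsum2
        nlinarith [hsum2]
      obtain ⟨θ, hθ⟩ := hPI x y hint
      have hyx : ∑ m, (starRingEnd ℂ) (y m) * x m = 0 := by
        have : ∑ m, (starRingEnd ℂ) (y m) * x m
            = ((Real.sqrt (-lam j) : ℝ) : ℂ) * ((Real.sqrt (lam i) : ℝ) : ℂ)
              * ∑ m, (starRingEnd ℂ) (U m j) * U m i := by
          rw [Finset.mul_sum]
          apply Finset.sum_congr rfl
          intro m _
          simp only [hx, hy, _root_.map_mul, Complex.conj_ofReal]
          ring
        rw [this, horth j i, if_neg (Ne.symm hij), mul_zero]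
      have hyy : ∑ m, (starRingEnd ℂ) (y m) * y m = ((-lam j : ℝ) : ℂ) := by
        have : ∑ m, (starRingEnd ℂ) (y m) * y m
            = ((Real.sqrt (-lam j) : ℝ) : ℂ) * ((Real.sqrt (-lam j) : ℝ) : ℂ)
              * ∑ m, (starRingEnd ℂ) (U m j) * U m j := by
          rw [Finset.mul_sum]
          apply Finset.sum_congr rfl
          intro m _
          simp only [hy, _root_.map_mul, Complex.conj_ofReal]
          ring
        rw [this, horth j j, if_pos rfl, mul_one, ← Complex.ofReal_mul,
          Real.mul_self_sqrt (by linarith : (0:ℝ) ≤ -lam j)]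
      have hbad : (0 : ℂ) = Complex.exp (θ * Complex.I) * ((-lam j : ℝ) : ℂ) := by
        rw [← hyx, ← hyy, Finset.mul_sum]
        apply Finset.sum_congr rfl
        intro m _
        rw [congrFun hθ m]
        ring
      have : ((-lam j : ℝ) : ℂ) ≠ 0 := by
        simp only [ne_eq, Complex.ofReal_eq_zero]
        linarith
      rcases mul_eq_zero.mp hbad.symm with h | h
      · exact Complex.exp_ne_zero _ h
      · exact this h
    · -- Case B: all eigenvalues nonnegative
      push_neg at hneg
      obtain ⟨i, hine⟩ := hlamne
      have hi : 0 < lam i := lt_of_le_of_ne (hneg i) (Ne.symm hine)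
      set x := fun m => ((Real.sqrt (lam i) : ℝ) : ℂ) * U m i with hx
      have hterm : ∀ n, lam i * Complex.normSq ((star U *ᵥ Φ n) i) = 0 := by
        intro n
        have hA := factA n
        have hnn : ∀ k ∈ Finset.univ, (0:ℝ) ≤ lam k * Complex.normSq ((star U *ᵥ Φ n) k) :=
          fun k _ => mul_nonneg (hneg k) (Complex.normSq_nonneg _)
        exact (Finset.sum_eq_zero_iff_of_nonneg hnn).mp hA i (Finset.mem_univ i)
      have hint : intensity Φ x = intensity Φ (fun _ => (0:ℂ)) := by
        funext n
        rw [hx, intensity_scaled_col, Real.sq_sqrt hi.le, hterm n]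
        simp [intensity]
      obtain ⟨θ, hθ⟩ := hPI x (fun _ => (0:ℂ)) hint
      obtain ⟨m, hm⟩ := hcol_ne i
      have h1 := congrFun hθ m
      simp only [hx, mul_zero] at h1
      rcases mul_eq_zero.mp h1 with h | h
      · rw [Complex.ofReal_eq_zero] at h
        exact (Real.sqrt_ne_zero'.mpr hi) h
      · exact hm h
  · by_cases hneg : ∃ j, lam j < 0
    · -- Case C: all eigenvalues nonpositive
      push_neg at hpos
      obtain ⟨j, hj⟩ := hneg
      set y := fun m => ((Real.sqrt (-lam j) : ℝ) : ℂ) * U m j with hy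
      have hterm : ∀ n, lam j * Complex.normSq ((star U *ᵥ Φ n) j) = 0 := by
        intro n
        have hA := factA n
        have hnp : ∀ k ∈ Finset.univ, lam k * Complex.normSq ((star U *ᵥ Φ n) k) ≤ (0:ℝ) :=
          fun k _ => mul_nonpos_of_nonpos_of_nonneg (hpos k)
            (Complex.normSq_nonneg _)
        exact (Finset.sum_eq_zero_iff_of_nonpos hnp).mp hA j (Finset.mem_univ j)
      have hint : intensity Φ (fun _ => (0:ℂ)) = intensity Φ y := by
        funext n
        rw [hy, intensity_scaled_col, Real.sq_sqrt (by linarith : (0:ℝ) ≤ -lam j)]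
        have := hterm n
        have h2 : (-lam j) * Complex.normSq ((star U *ᵥ Φ n) j) = 0 := by linarith
        rw [h2]
        simp [intensity]
      obtain ⟨θ, hθ⟩ := hPI (fun _ => (0:ℂ)) y hint
      obtain ⟨m, hm⟩ := hcol_ne j
      have h1 := (congrFun hθ m).symm
      simp only [hy] at h1
      rcases mul_eq_zero.mp h1 with h | h
      · exact Complex.exp_ne_zero _ h
      · rcases mul_eq_zero.mp h with h' | h'
        · rw [Complex.ofReal_eq_zero] at h'
          exact (Real.sqrt_ne_zero'.mpr (by linarith : (0:ℝ) < -lam j)) h'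
        · exact hm h'
    · -- Case D: all eigenvalues zero
      push_neg at hpos hneg
      obtain ⟨i, hine⟩ := hlamne
      exact hine (le_antisymm (hpos i) (hneg i))

lemma forward_dir {M N : ℕ} (Φ : Fin N → Fin M → ℂ) (h : ¬ PhaseInjective Φ) :
    ∃ Q : Matrix (Fin M) (Fin M) ℂ, Q ≠ 0 ∧ Q.IsHermitian ∧ Q.rank ≤ 2 ∧
      ∀ n : Fin N, (fun m => (starRingEnd ℂ) (Φ n m)) ⬝ᵥ Q *ᵥ (Φ n) = 0 := by
  rw [PhaseInjective] at h
  push_neg at h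
  obtain ⟨x, y, hint, hnp⟩ := h
  refine ⟨Matrix.vecMulVec x (star x) - Matrix.vecMulVec y (star y), ?_, ?_, ?_, ?_⟩
  · intro h0
    have hper : ∀ m m', x m * (starRingEnd ℂ) (x m') = y m * (starRingEnd ℂ) (y m') := by
      intro m m'
      have := congrFun (congrFun h0 m) m'
      simp only [Matrix.sub_apply, Matrix.vecMulVec_apply, Pi.star_apply, RCLike.star_def,
        Matrix.zero_apply, sub_eq_zero] at this
      exact this
    obtain ⟨θ, hθ⟩ := phase_of_outer_eq x y hper
    exact hnp θ hθ
  · ext i j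
    simp only [Matrix.conjTranspose_apply, Matrix.sub_apply, Matrix.vecMulVec_apply,
      Pi.star_apply, RCLike.star_def, star_sub, star_mul', Complex.conj_conj]
    ring
  · have : Matrix.vecMulVec x (star x) - Matrix.vecMulVec y (star y)
        = Matrix.vecMulVec x (star x) + Matrix.vecMulVec (-y) (star y) := by
      ext i j
      simp [Matrix.vecMulVec_apply]
      ring
    rw [this]
    calc (Matrix.vecMulVec x (star x) + Matrix.vecMulVec (-y) (star y)).rank
        ≤ (Matrix.vecMulVec x (star x)).rank + (Matrix.vecMulVec (-y) (star y)).rank :=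
          my_rank_add_le _ _
      _ ≤ 1 + 1 := add_le_add (my_rank_vecMulVec_le _ _) (my_rank_vecMulVec_le _ _)
  · intro n
    have hs : (Matrix.vecMulVec x (star x) - Matrix.vecMulVec y (star y)) *ᵥ (Φ n)
        = Matrix.vecMulVec x (star x) *ᵥ (Φ n) - Matrix.vecMulVec y (star y) *ᵥ (Φ n) :=
      Matrix.sub_mulVec _ _ _
    rw [hs, dotProduct_sub, quad_form_outer, quad_form_outer]
    have := congrFun hint n
    simp only [intensity, ← Complex.sq_norm] at *
    rw [this]
    ring

theorem not_phaseInjective_iff_exists_hermitian (M N : ℕ) (Φ : Fin N → Fin M → ℂ) :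
    ¬ PhaseInjective Φ ↔
      ∃ Q : Matrix (Fin M) (Fin M) ℂ, Q ≠ 0 ∧ Q.IsHermitian ∧ Q.rank ≤ 2 ∧
        ∀ n : Fin N, (fun m => (starRingEnd ℂ) (Φ n m)) ⬝ᵥ Q *ᵥ (Φ n) = 0 := by
  constructor
  · exact forward_dir Φ
  · rintro ⟨Q, hQ0, hH, hrk, hqf⟩
    exact backward_dir Φ Q hQ0 hH hrk hqf
end

section
/- Let U, V ∈ ℝ^{M×N} with columns uₙ, vₙ, and let Φ = U + iV be the frame with vectors φₙ = uₙ + i vₙ ∈ ℂ^M. Then the intensity measurement map 𝒜_Φ is injective on ℂ^M/S¹ if and only if there is NO pair (X, Y) ≠ (0, 0), with X ∈ ℝ^{M×M} symmetric and Y ∈ ℝ^{M×M} skew-symmetric, such that rank(X + iY) ≤ 2 and uₙᵀ X uₙ + vₙᵀ X vₙ − 2 uₙᵀ Y vₙ = 0 for every 1 ≤ n ≤ N. -/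
open Matrix Complex MvPolynomial Finset

section Aux

variable {M N : ℕ}

private lemma swap_dot (A : Matrix (Fin M) (Fin M) ℂ) (a b : Fin M → ℂ) :
    a ⬝ᵥ A *ᵥ b = b ⬝ᵥ Aᵀ *ᵥ a := by
  rw [Matrix.dotProduct_mulVec, ← Matrix.mulVec_transpose, dotProduct_comm]

private lemma cast_dot (W : Matrix (Fin M) (Fin M) ℝ) (p q : Fin M → ℝ) :
    ((p ⬝ᵥ W *ᵥ q : ℝ) : ℂ)
      = (fun m => (p m : ℂ)) ⬝ᵥ (W.map (fun r => (r : ℂ))) *ᵥ (fun m => (q m : ℂ)) := by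
  have h0 : ((p ⬝ᵥ W *ᵥ q : ℝ) : ℂ) = Complex.ofRealHom (p ⬝ᵥ W *ᵥ q) := rfl
  rw [h0, RingHom.map_dotProduct Complex.ofRealHom p (W *ᵥ q)]
  congr 1
  funext i
  exact RingHom.map_mulVec Complex.ofRealHom W q i

private lemma quad_real (X Y : Matrix (Fin M) (Fin M) ℝ) (hX : Xᵀ = X) (hY : Yᵀ = -Y)
    (u v : Fin M → ℝ) :
    star (fun m => (u m : ℂ) + (v m : ℂ) * I) ⬝ᵥ
      (X.map (fun r => (r : ℂ)) + I • Y.map (fun r => (r : ℂ))) *ᵥ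
        (fun m => (u m : ℂ) + (v m : ℂ) * I)
      = ((u ⬝ᵥ X *ᵥ u + v ⬝ᵥ X *ᵥ v - 2 * (u ⬝ᵥ Y *ᵥ v) : ℝ) : ℂ) := by
  set a : Fin M → ℂ := fun m => (u m : ℂ) with ha
  set b : Fin M → ℂ := fun m => (v m : ℂ) with hb
  set A : Matrix (Fin M) (Fin M) ℂ := X.map (fun r => (r : ℂ)) with hA
  set B : Matrix (Fin M) (Fin M) ℂ := Y.map (fun r => (r : ℂ)) with hB
  have hAt : Aᵀ = A := by
    ext i j
    simp only [hA, Matrix.transpose_apply, Matrix.map_apply]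
    have e : X j i = X i j := (congrFun (congrFun hX j) i).symm
    rw [e]
  have hBt : Bᵀ = -B := by
    ext i j
    simp only [hB, Matrix.transpose_apply, Matrix.map_apply, Matrix.neg_apply]
    have e : Y j i = -Y i j := by
      have h := congrFun (congrFun hY i) j; simpa using h
    rw [e]
    push_cast; ring
  have hphi : (fun m => (u m : ℂ) + (v m : ℂ) * I) = a + I • b := by
    funext m; simp [ha, hb, Pi.add_apply, Pi.smul_apply, smul_eq_mul, mul_comm]
  have hstar : star (fun m => (u m : ℂ) + (v m : ℂ) * I) = a + (-I) • b := by
    funext m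
    simp [ha, hb, Pi.star_apply, Complex.conj_ofReal, Complex.conj_I,
      Pi.add_apply, Pi.smul_apply, smul_eq_mul, mul_comm]
  rw [hstar]; conv_lhs => rw [hphi]
  have h1 : b ⬝ᵥ A *ᵥ a = a ⬝ᵥ A *ᵥ b := by rw [swap_dot, hAt]
  have h2 : a ⬝ᵥ B *ᵥ a = 0 := by
    have h := swap_dot B a a
    rw [hBt] at h
    simp only [Matrix.neg_mulVec, dotProduct_neg] at h
    linear_combination h / 2
  have h3 : b ⬝ᵥ B *ᵥ b = 0 := by
    have h := swap_dot B b b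
    rw [hBt] at h
    simp only [Matrix.neg_mulVec, dotProduct_neg] at h
    linear_combination h / 2
  have h4 : b ⬝ᵥ B *ᵥ a = -(a ⬝ᵥ B *ᵥ b) := by
    have h := swap_dot B b a
    rw [hBt] at h
    simp only [Matrix.neg_mulVec, dotProduct_neg] at h
    exact h
  rw [Complex.ofReal_sub, Complex.ofReal_add, Complex.ofReal_mul, cast_dot, cast_dot, cast_dot]
  simp only [Matrix.add_mulVec, Matrix.mulVec_add, Matrix.mulVec_smul,
    Matrix.smul_mulVec, dotProduct_add, add_dotProduct, dotProduct_smul,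
    smul_dotProduct, smul_eq_mul]
  rw [h1, h2, h3, h4]
  push_cast
  linear_combination (2 * (a ⬝ᵥ B *ᵥ b) - b ⬝ᵥ A *ᵥ b) * Complex.I_sq

private lemma quad_vecMulVec (x φ : Fin M → ℂ) :
    star φ ⬝ᵥ (vecMulVec x (star x)) *ᵥ φ
      = ((‖∑ m, x m * (starRingEnd ℂ) (φ m)‖ ^ 2 : ℝ) : ℂ) := by
  set t : ℂ := ∑ m, x m * (starRingEnd ℂ) (φ m) with ht
  have lhs_eq : star φ ⬝ᵥ (vecMulVec x (star x)) *ᵥ φ = t * (starRingEnd ℂ) t := by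
    simp only [dotProduct, mulVec, vecMulVec, Matrix.of_apply, Pi.star_apply, RCLike.star_def]
    calc ∑ m, (starRingEnd ℂ) (φ m) * (∑ k, x m * (starRingEnd ℂ) (x k) * φ k)
        = (∑ m, (starRingEnd ℂ) (φ m) * x m) * ∑ k, (starRingEnd ℂ) (x k) * φ k := by
          rw [Finset.sum_mul]
          exact Finset.sum_congr rfl fun m _ => by
            rw [Finset.mul_sum, Finset.mul_sum]
            exact Finset.sum_congr rfl fun k _ => by ring
      _ = t * (starRingEnd ℂ) t := by
          rw [ht, map_sum]
          congr 1
          · exact Finset.sum_congr rfl fun m _ => mul_comm _ _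
          · exact Finset.sum_congr rfl fun k _ => by simp
  rw [lhs_eq, ht, Complex.sq_norm]
  exact (Complex.mul_conj _)

private lemma rank_diff_le_two (x y : Fin M → ℂ) :
    (vecMulVec x (star x) - vecMulVec y (star y)).rank ≤ 2 := by
  have hfac : vecMulVec x (star x) - vecMulVec y (star y)
      = (Matrix.of fun m (i : Fin 2) => if i = 0 then x m else y m) *
        (Matrix.of fun (i : Fin 2) k =>
          if i = 0 then (starRingEnd ℂ) (x k) else -((starRingEnd ℂ) (y k))) := by
    ext m k
    simp only [Matrix.mul_apply, Fin.sum_univ_two, Matrix.of_apply, Matrix.sub_apply,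
      vecMulVec, Pi.star_apply, RCLike.star_def]
    norm_num
    ring
  rw [hfac]
  refine le_trans (Matrix.rank_mul_le_left _ _) (le_trans (Matrix.rank_le_card_width _) ?_)
  simp

private lemma phase_of_rankone_eq {x y : Fin M → ℂ}
    (h : vecMulVec x (star x) = vecMulVec y (star y)) :
    ∃ θ : ℝ, x = fun m => Complex.exp (θ * I) * y m := by
  have he : ∀ m k, x m * (starRingEnd ℂ) (x k) = y m * (starRingEnd ℂ) (y k) := by
    intro m k
    have := congrFun (congrFun h m) k
    simpa [vecMulVec, Pi.star_apply, RCLike.star_def] using this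
  by_cases hy : y = 0
  · subst hy
    refine ⟨0, funext fun m => ?_⟩
    have h1 := he m m
    simp only [Pi.zero_apply, mul_zero, zero_mul] at h1
    have h2 : Complex.normSq (x m) = 0 := by
      have := congrArg Complex.re h1
      simpa [Complex.mul_conj] using this
    simp [Complex.normSq_eq_zero.mp h2]
  · obtain ⟨m₀, hm₀'⟩ := Function.ne_iff.mp hy
    have hm₀ : y m₀ ≠ 0 := by simpa using hm₀'
    have hnsq : Complex.normSq (x m₀) = Complex.normSq (y m₀) := by
      have h1 := he m₀ m₀
      have := congrArg Complex.re h1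
      simpa [Complex.mul_conj] using this
    have hab : ‖x m₀‖ = ‖y m₀‖ := by
      rw [Complex.norm_def, Complex.norm_def, hnsq]
    have hx₀ : x m₀ ≠ 0 := by
      intro h0
      apply hm₀
      rw [h0] at hnsq
      simp only [map_zero] at hnsq
      exact Complex.normSq_eq_zero.mp hnsq.symm
    set c : ℂ := x m₀ / y m₀ with hc
    have habs : ‖c‖ = 1 := by
      rw [hc, norm_div, hab, div_self]
      simpa using hm₀
    refine ⟨Complex.arg c, funext fun m => ?_⟩
    have hexp : Complex.exp ((Complex.arg c : ℝ) * I) = c := by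
      have := Complex.norm_mul_exp_arg_mul_I c
      rw [habs] at this
      simpa using this
    rw [hexp, hc, div_mul_eq_mul_div, eq_div_iff hm₀]
    have hcm : (starRingEnd ℂ) (y m₀) * y m₀ = (starRingEnd ℂ) (x m₀) * x m₀ := by
      rw [mul_comm, mul_comm ((starRingEnd ℂ) (x m₀)), Complex.mul_conj, Complex.mul_conj, hnsq]
    have key : x m * y m₀ * (starRingEnd ℂ) (x m₀) = x m₀ * y m * (starRingEnd ℂ) (x m₀) := by
      calc x m * y m₀ * (starRingEnd ℂ) (x m₀) = (x m * (starRingEnd ℂ) (x m₀)) * y m₀ := by ring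
        _ = (y m * (starRingEnd ℂ) (y m₀)) * y m₀ := by rw [he m m₀]
        _ = y m * ((starRingEnd ℂ) (y m₀) * y m₀) := by ring
        _ = y m * ((starRingEnd ℂ) (x m₀) * x m₀) := by rw [hcm]
        _ = x m₀ * y m * (starRingEnd ℂ) (x m₀) := by ring
    exact mul_right_cancel₀ (by simpa using hx₀ : (starRingEnd ℂ) (x m₀) ≠ 0) key

private lemma quad_spectral (Q : Matrix (Fin M) (Fin M) ℂ) (hQ : Q.IsHermitian) (φ : Fin M → ℂ) :
    star φ ⬝ᵥ Q *ᵥ φ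
      = ∑ i, ((hQ.eigenvalues i : ℝ) : ℂ) *
          ((Complex.normSq (((hQ.eigenvectorUnitary : Matrix (Fin M) (Fin M) ℂ)ᴴ *ᵥ φ) i) : ℝ) : ℂ) := by
  set V : Matrix (Fin M) (Fin M) ℂ := (hQ.eigenvectorUnitary : Matrix (Fin M) (Fin M) ℂ) with hV
  set ψ : Fin M → ℂ := Vᴴ *ᵥ φ with hψ
  have hsps : star ψ = star φ ᵥ* V := by
    rw [hψ, Matrix.star_mulVec, Matrix.conjTranspose_conjTranspose]
  conv_lhs => rw [hQ.spectral_theorem, Unitary.conjStarAlgAut_apply]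
  rw [Matrix.star_eq_conjTranspose, ← hV]
  rw [← Matrix.mulVec_mulVec, ← Matrix.mulVec_mulVec]
  rw [Matrix.dotProduct_mulVec, ← hsps, ← hψ]
  simp only [dotProduct, Matrix.mulVec_diagonal, Pi.star_apply, RCLike.star_def,
    Function.comp_apply, RCLike.ofReal_alg]
  refine Finset.sum_congr rfl fun i _ => ?_
  have hns : (starRingEnd ℂ) (ψ i) * ψ i = (Complex.normSq (ψ i) : ℂ) := by
    rw [mul_comm, Complex.mul_conj]
  calc (starRingEnd ℂ) (ψ i) * ((hQ.eigenvalues i : ℝ) • (1:ℂ) * ψ i)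
      = ((hQ.eigenvalues i : ℝ) : ℂ) * ((starRingEnd ℂ) (ψ i) * ψ i) := by
        simp [smul_eq_mul]; ring
    _ = _ := by rw [hns]

private lemma eig_exists_ne (Q : Matrix (Fin M) (Fin M) ℂ) (hQ : Q.IsHermitian) (hne : Q ≠ 0) :
    ∃ i, hQ.eigenvalues i ≠ 0 := by
  by_contra h
  push_neg at h
  apply hne
  have hd : diagonal (RCLike.ofReal ∘ hQ.eigenvalues) = (0 : Matrix (Fin M) (Fin M) ℂ) := by
    ext i j
    by_cases hij : i = j
    · subst hij; simp [Matrix.diagonal_apply_eq, h i]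
    · simp [Matrix.diagonal_apply_ne _ hij]
  rw [hQ.spectral_theorem, hd, Unitary.conjStarAlgAut_apply, Matrix.mul_zero, Matrix.zero_mul]

private lemma col_orthonormal (Q : Matrix (Fin M) (Fin M) ℂ) (hQ : Q.IsHermitian) :
    ∀ j k, (∑ m, (starRingEnd ℂ) ((hQ.eigenvectorUnitary : Matrix (Fin M) (Fin M) ℂ) m j) *
        (hQ.eigenvectorUnitary : Matrix (Fin M) (Fin M) ℂ) m k) = if j = k then 1 else 0 := by
  intro j k
  have h1 : star (hQ.eigenvectorUnitary : Matrix (Fin M) (Fin M) ℂ) *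
      (hQ.eigenvectorUnitary : Matrix (Fin M) (Fin M) ℂ) = 1 :=
    Matrix.mem_unitaryGroup_iff'.mp hQ.eigenvectorUnitary.2
  have := congrFun (congrFun h1 j) k
  rw [Matrix.mul_apply] at this
  simp only [Matrix.star_eq_conjTranspose, Matrix.conjTranspose_apply, RCLike.star_def] at this
  rw [this, Matrix.one_apply]

private lemma intensity_smul (Φ : Fin N → Fin M → ℂ) (w : Fin M → ℂ) (c : ℝ) (n : Fin N) :
    intensity Φ (fun m => (c : ℂ) * w m) n
      = c ^ 2 * Complex.normSq (∑ m, (starRingEnd ℂ) (w m) * Φ n m) := by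
  unfold intensity
  have h1 : ∑ m, ((c : ℂ) * w m) * (starRingEnd ℂ) (Φ n m)
      = (c : ℂ) * (starRingEnd ℂ) (∑ m, (starRingEnd ℂ) (w m) * Φ n m) := by
    rw [map_sum, Finset.mul_sum]
    exact Finset.sum_congr rfl fun m _ => by simp; ring
  rw [h1, norm_mul, Complex.norm_real, Complex.norm_conj, mul_pow, Complex.sq_norm,
    Real.norm_eq_abs, _root_.sq_abs]

private lemma mulVec_conjT_apply (W : Matrix (Fin M) (Fin M) ℂ) (φ : Fin M → ℂ) (j : Fin M) :
    (Wᴴ *ᵥ φ) j = ∑ m, (starRingEnd ℂ) (W m j) * φ m := by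
  simp [mulVec, dotProduct, Matrix.conjTranspose_apply, RCLike.star_def]

end Aux

theorem phaseInjective_iff_no_real_pair (M N : ℕ) (U V : Matrix (Fin M) (Fin N) ℝ) :
    PhaseInjective (frameOf U V) ↔
      ¬ ∃ (X Y : Matrix (Fin M) (Fin M) ℝ), ¬ (X = 0 ∧ Y = 0) ∧ X.IsSymm ∧ Yᵀ = -Y ∧
        (X.map (fun r => (r : ℂ)) + Complex.I • Y.map (fun r => (r : ℂ))).rank ≤ 2 ∧
        ∀ n : Fin N,
          (fun m => U m n) ⬝ᵥ X *ᵥ (fun m => U m n)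
            + (fun m => V m n) ⬝ᵥ X *ᵥ (fun m => V m n)
            - 2 * ((fun m => U m n) ⬝ᵥ Y *ᵥ (fun m => V m n)) = 0 := by
  constructor
  · -- injective → no bad pair
    intro hinj
    rintro ⟨X, Y, hne0, hXs, hYs, hrank, hcon⟩
    have hXt : Xᵀ = X := hXs
    set Φ := frameOf U V with hΦ
    set Q : Matrix (Fin M) (Fin M) ℂ :=
      X.map (fun r => (r : ℂ)) + Complex.I • Y.map (fun r => (r : ℂ)) with hQdef
    have hQH : Q.IsHermitian := by
      rw [Matrix.IsHermitian]
      ext i j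
      simp only [hQdef, Matrix.conjTranspose_apply, Matrix.add_apply, Matrix.smul_apply,
        Matrix.map_apply, smul_eq_mul, map_add, _root_.map_mul, Complex.conj_ofReal,
        Complex.conj_I]
      have e1 : X j i = X i j := congrFun (congrFun hXt i) j
      have e2 : Y j i = -Y i j := by
        have h := congrFun (congrFun hYs i) j; simpa using h
      rw [e1, e2]
      simp [Complex.ext_iff]
    -- the quadratic form vanishes on the frame
    have hquad : ∀ n, star (Φ n) ⬝ᵥ Q *ᵥ (Φ n) = 0 := by
      intro n
      have h1 : star (Φ n) ⬝ᵥ Q *ᵥ (Φ n)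
          = (((fun m => U m n) ⬝ᵥ X *ᵥ (fun m => U m n)
              + (fun m => V m n) ⬝ᵥ X *ᵥ (fun m => V m n)
              - 2 * ((fun m => U m n) ⬝ᵥ Y *ᵥ (fun m => V m n)) : ℝ) : ℂ) :=
        quad_real X Y hXt hYs (fun m => U m n) (fun m => V m n)
      rw [h1, hcon n, Complex.ofReal_zero]
    set W : Matrix (Fin M) (Fin M) ℂ := (hQH.eigenvectorUnitary : Matrix (Fin M) (Fin M) ℂ)
      with hW
    set lam : Fin M → ℝ := hQH.eigenvalues with hlam
    set ψ : Fin N → Fin M → ℂ := fun n => Wᴴ *ᵥ (Φ n) with hψ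
    have key : ∀ n, ∑ i, lam i * Complex.normSq (ψ n i) = 0 := by
      intro n
      have h1 := quad_spectral Q hQH (Φ n)
      rw [hquad n] at h1
      have h2 : ((∑ i, lam i * Complex.normSq (ψ n i) : ℝ) : ℂ) = 0 := by
        rw [Complex.ofReal_sum]
        push_cast
        exact h1.symm
      exact_mod_cast h2
    have hcard : Fintype.card {i // lam i ≠ 0} ≤ 2 := by
      rw [hlam, ← hQH.rank_eq_card_non_zero_eigs]
      exact hrank
    -- Q ≠ 0
    have hQne : Q ≠ 0 := by
      intro hQ0
      apply hne0
      constructor <;> ext i j <;>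
      · have h := congrFun (congrFun hQ0 i) j
        simp only [hQdef, Matrix.add_apply, Matrix.smul_apply, Matrix.map_apply,
          smul_eq_mul, Matrix.zero_apply] at h
        have := congrArg Complex.re h
        have := congrArg Complex.im h
        simp only [Complex.add_re, Complex.ofReal_re, Complex.mul_re, Complex.I_re,
          Complex.I_im, Complex.ofReal_im, Complex.add_im, Complex.mul_im,
          Complex.zero_re, Complex.zero_im] at *
        simp only [Matrix.zero_apply]
        linarith
    obtain ⟨j₀, hj₀⟩ := eig_exists_ne Q hQH hQne
    -- column facts
    have horth : ∀ j k, (∑ m, (starRingEnd ℂ) (W m j) * W m k) = if j = k then 1 else 0 :=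
      col_orthonormal Q hQH
    -- helper: intensities of scaled columns
    have hint : ∀ (c : ℝ) (j : Fin M) (n : Fin N),
        intensity Φ (fun m => (c : ℂ) * W m j) n = c ^ 2 * Complex.normSq (ψ n j) := by
      intro c j n
      rw [intensity_smul Φ (fun m => W m j) c n]
      congr 2

    -- helper for "single-sign" contradiction
    have single : ∀ j : Fin M, (∀ n, Complex.normSq (ψ n j) = 0) → False := by
      intro j hzero
      have hEq : intensity Φ (fun m => ((1:ℝ) : ℂ) * W m j) = intensity Φ 0 := by
        funext n
        rw [hint 1 j n, hzero n]
        simp [intensity]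
      obtain ⟨θ, hθ⟩ := hinj _ _ hEq
      have hWj0 : ∀ m, W m j = 0 := by
        intro m
        have := congrFun hθ m
        simpa using this
      have h1 := horth j j
      rw [if_pos rfl] at h1
      rw [Finset.sum_eq_zero (fun m _ => by rw [hWj0 m]; simp)] at h1
      exact zero_ne_one h1
    by_cases hpos : ∃ j, 0 < lam j
    · by_cases hneg : ∃ k, lam k < 0
      · -- mixed signs
        obtain ⟨j, hj⟩ := hpos
        obtain ⟨k, hk⟩ := hneg
        have hjk : j ≠ k := fun h => by rw [h] at hj; linarith
        have hother : ∀ i, i ≠ j → i ≠ k → lam i = 0 := by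
          intro i hij hik
          by_contra hi
          have hsub : ({i, j, k} : Finset (Fin M)) ⊆ Finset.univ.filter (fun i => lam i ≠ 0) := by
            intro a ha
            simp only [Finset.mem_insert, Finset.mem_singleton] at ha
            rcases ha with rfl | rfl | rfl <;>
              simp [hi, ne_of_gt hj, ne_of_lt hk]
          have hc3 : ({i, j, k} : Finset (Fin M)).card = 3 := by
            rw [Finset.card_insert_of_notMem (by simp [hij, hik]),
              Finset.card_insert_of_notMem (by simp [hjk])]
            rfl
          have hle := Finset.card_le_card hsub
          rw [Fintype.card_subtype] at hcard
          omega
        have key2 : ∀ n, lam j * Complex.normSq (ψ n j) + lam k * Complex.normSq (ψ n k) = 0 := by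
          intro n
          have h1 := key n
          rw [← Finset.sum_subset (Finset.subset_univ ({j, k} : Finset (Fin M)))
            (fun i _ hi => by
              have hij : i ≠ j := fun e => hi (by simp [e])
              have hik : i ≠ k := fun e => hi (by simp [e])
              rw [hother i hij hik, zero_mul])] at h1
          rwa [Finset.sum_pair hjk] at h1
        set x : Fin M → ℂ := fun m => ((Real.sqrt (lam j) : ℝ) : ℂ) * W m j with hx
        set y : Fin M → ℂ := fun m => ((Real.sqrt (-lam k) : ℝ) : ℂ) * W m k with hy
        have hEq : intensity Φ x = intensity Φ y := by
          funext n
          rw [hx, hy, hint _ j n, hint _ k n,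
            Real.sq_sqrt (le_of_lt hj), Real.sq_sqrt (by linarith : (0:ℝ) ≤ -lam k)]
          have := key2 n
          linarith
        obtain ⟨θ, hθ⟩ := hinj x y hEq
        -- inner products with column j
        have e1 : ∑ m, x m * (starRingEnd ℂ) (W m j) = ((Real.sqrt (lam j) : ℝ) : ℂ) := by
          rw [hx]
          calc ∑ m, (((Real.sqrt (lam j) : ℝ) : ℂ) * W m j) * (starRingEnd ℂ) (W m j)
              = ((Real.sqrt (lam j) : ℝ) : ℂ) *
                  ∑ m, (starRingEnd ℂ) (W m j) * W m j := by
                rw [Finset.mul_sum]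
                exact Finset.sum_congr rfl fun m _ => by ring
            _ = _ := by rw [horth j j]; simp
        have e2 : ∑ m, (Complex.exp (θ * I) * y m) * (starRingEnd ℂ) (W m j) = 0 := by
          rw [hy]
          calc ∑ m, (Complex.exp (θ * I) * (((Real.sqrt (-lam k) : ℝ) : ℂ) * W m k)) *
                (starRingEnd ℂ) (W m j)
              = (Complex.exp (θ * I) * ((Real.sqrt (-lam k) : ℝ) : ℂ)) *
                  ∑ m, (starRingEnd ℂ) (W m j) * W m k := by
                rw [Finset.mul_sum]
                exact Finset.sum_congr rfl fun m _ => by ring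
            _ = 0 := by rw [horth j k, if_neg hjk, mul_zero]
        have e3 : ∑ m, x m * (starRingEnd ℂ) (W m j)
            = ∑ m, (Complex.exp (θ * I) * y m) * (starRingEnd ℂ) (W m j) := by
          exact Finset.sum_congr rfl fun m _ => by rw [congrFun hθ m]
        rw [e1, e2] at e3
        have : Real.sqrt (lam j) = 0 := by exact_mod_cast e3
        have := Real.sqrt_pos.mpr hj
        linarith
      · -- all eigenvalues nonneg
        push_neg at hneg
        have hzero : ∀ n, Complex.normSq (ψ n j₀) = 0 := by
          intro n
          have h1 := key n
          have hterm := (Finset.sum_eq_zero_iff_of_nonneg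
            (fun i _ => mul_nonneg (hneg i) (Complex.normSq_nonneg _))).mp h1 j₀
            (Finset.mem_univ _)
          rcases mul_eq_zero.mp hterm with h | h
          · exact absurd h hj₀
          · exact h
        exact (single j₀ hzero).elim
    · -- all eigenvalues nonpos
      push_neg at hpos
      have hzero : ∀ n, Complex.normSq (ψ n j₀) = 0 := by
        intro n
        have h1 := key n
        have hterm := (Finset.sum_eq_zero_iff_of_nonpos
          (fun i _ => mul_nonpos_of_nonpos_of_nonneg (hpos i) (Complex.normSq_nonneg _))).mp h1 j₀
          (Finset.mem_univ _)
        rcases mul_eq_zero.mp hterm with h | h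
        · exact absurd h hj₀
        · exact h
      exact (single j₀ hzero).elim
  · -- no bad pair → injective
    intro hno x y hxy
    by_contra hne
    apply hno
    set Q : Matrix (Fin M) (Fin M) ℂ := vecMulVec x (star x) - vecMulVec y (star y) with hQdef
    have hherm : ∀ i j, Q j i = (starRingEnd ℂ) (Q i j) := by
      intro i j
      simp only [hQdef, Matrix.sub_apply, vecMulVec, Matrix.of_apply, Pi.star_apply,
        RCLike.star_def, map_sub, _root_.map_mul, Complex.conj_conj]
      ring
    set X : Matrix (Fin M) (Fin M) ℝ := Matrix.of fun i j => (Q i j).re with hXdef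
    set Y : Matrix (Fin M) (Fin M) ℝ := Matrix.of fun i j => (Q i j).im with hYdef
    have hmap : X.map (fun r => (r : ℂ)) + Complex.I • Y.map (fun r => (r : ℂ)) = Q := by
      ext i j
      simp only [Matrix.add_apply, Matrix.smul_apply, Matrix.map_apply, Matrix.of_apply,
        hXdef, hYdef, smul_eq_mul]
      rw [mul_comm]
      exact Complex.re_add_im _
    have hXsymm : X.IsSymm := by
      rw [Matrix.IsSymm]
      ext i j
      simp only [Matrix.transpose_apply, hXdef, Matrix.of_apply]
      rw [hherm j i]
      simp
    have hYskew : Yᵀ = -Y := by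
      ext i j
      simp only [Matrix.transpose_apply, Matrix.neg_apply, hYdef, Matrix.of_apply]
      rw [hherm j i]
      simp
    refine ⟨X, Y, ?_, hXsymm, hYskew, ?_, ?_⟩
    · rintro ⟨hX0, hY0⟩
      have hQ0 : Q = 0 := by
        rw [← hmap, hX0, hY0]
        simp
      have : vecMulVec x (star x) = vecMulVec y (star y) := by
        have := sub_eq_zero.mp (hQdef ▸ hQ0)
        exact this
      exact hne (phase_of_rankone_eq this)
    · rw [hmap]
      exact rank_diff_le_two x y
    · intro n
      have h1 := quad_real X Y hXsymm hYskew (fun m => U m n) (fun m => V m n)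
      rw [hmap] at h1
      have h2 : star (frameOf U V n) ⬝ᵥ Q *ᵥ (frameOf U V n)
          = ((intensity (frameOf U V) x n : ℝ) : ℂ) - ((intensity (frameOf U V) y n : ℝ) : ℂ) := by
        rw [hQdef, Matrix.sub_mulVec, dotProduct_sub]
        rw [quad_vecMulVec x (frameOf U V n), quad_vecMulVec y (frameOf U V n)]
        rfl
      have h3 : star (frameOf U V n) ⬝ᵥ Q *ᵥ (frameOf U V n) = 0 := by
        rw [h2, congrFun hxy n, sub_self]
      have h4 := h1.symm.trans h3
      exact_mod_cast h4
end

section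
/- Let M = 2 and N = 4, let U, V ∈ ℝ^{2×4} have entries u_{mn}, v_{mn}, and let J be the 4×4 real matrix whose n-th row is ( u_{1n}² + v_{1n}², 2(u_{1n}u_{2n} + v_{1n}v_{2n}), u_{2n}² + v_{2n}², 2(u_{2n}v_{1n} − u_{1n}v_{2n}) ) for n = 1, 2, 3, 4. Then the intensity measurement map 𝒜_Φ associated to the frame Φ = U + iV (with vectors φₙ = uₙ + i vₙ ∈ ℂ²) is injective on ℂ²/S¹ if and only if det(J) ≠ 0. -/
open Matrix Complex MvPolynomial Finset

noncomputable def Jmat (U V : Matrix (Fin 2) (Fin 4) ℝ) : Matrix (Fin 4) (Fin 4) ℝ :=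
  Matrix.of fun n : Fin 4 =>
    ![U 0 n ^ 2 + V 0 n ^ 2,
      2 * (U 0 n * U 1 n + V 0 n * V 1 n),
      U 1 n ^ 2 + V 1 n ^ 2,
      2 * (U 1 n * V 0 n - U 0 n * V 1 n)]

noncomputable def wvec (x : Fin 2 → ℂ) : Fin 4 → ℝ :=
  ![Complex.normSq (x 0), (x 0 * (starRingEnd ℂ) (x 1)).re,
    Complex.normSq (x 1), (x 0 * (starRingEnd ℂ) (x 1)).im]

lemma intensity_eq (U V : Matrix (Fin 2) (Fin 4) ℝ) (x : Fin 2 → ℂ) :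
    intensity (frameOf U V) x = (Jmat U V).mulVec (wvec x) := by
  funext n
  simp only [intensity, frameOf, Fin.sum_univ_two, Matrix.mulVec, dotProduct,
    Fin.sum_univ_four, wvec, Jmat, Matrix.of_apply, Matrix.cons_val_zero, Matrix.cons_val_one,
    Matrix.head_cons, Matrix.cons_val_two, Matrix.tail_cons, Matrix.cons_val_three]
  rw [Complex.sq_norm]
  simp only [Complex.normSq_apply, Complex.add_re, Complex.add_im, Complex.mul_re,
    Complex.mul_im, map_add, _root_.map_mul, Complex.conj_re, Complex.conj_im,
    Complex.conj_ofReal, Complex.conj_I,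
    Complex.ofReal_re, Complex.ofReal_im, Complex.I_re, Complex.I_im, Complex.neg_re,
    Complex.neg_im, Complex.mul_re, Complex.mul_im]
  ring

lemma phase_lemma (x y : Fin 2 → ℂ)
    (h0 : Complex.normSq (x 0) = Complex.normSq (y 0))
    (h1 : Complex.normSq (x 1) = Complex.normSq (y 1))
    (h2 : x 0 * (starRingEnd ℂ) (x 1) = y 0 * (starRingEnd ℂ) (y 1)) :
    ∃ θ : ℝ, x = fun m => Complex.exp (θ * Complex.I) * y m := by
  obtain ⟨c, hc, hx⟩ : ∃ c : ℂ, ‖c‖ = 1 ∧ ∀ m, x m = c * y m := by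
    by_cases hy0 : y 0 = 0
    · by_cases hy1 : y 1 = 0
      · refine ⟨1, by simp, fun m => ?_⟩
        have hx0 : x 0 = 0 := by
          rw [← Complex.normSq_eq_zero, h0, hy0, Complex.normSq_zero]
        have hx1 : x 1 = 0 := by
          rw [← Complex.normSq_eq_zero, h1, hy1, Complex.normSq_zero]
        fin_cases m <;> simp [hx0, hx1, hy0, hy1]
      · have hx1 : x 1 ≠ 0 := fun h =>
          hy1 (by rw [← Complex.normSq_eq_zero, ← h1, h, Complex.normSq_zero])
        refine ⟨x 1 / y 1, ?_, fun m => ?_⟩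
        · rw [norm_div]
          have habs : ‖x 1‖ = ‖y 1‖ := by
            rw [Complex.norm_def, Complex.norm_def, h1]
          rw [habs, div_self (by simpa using hy1)]
        · have hx0 : x 0 = 0 := by
            have h5 : x 0 * (starRingEnd ℂ) (x 1) = 0 := by rw [h2, hy0, zero_mul]
            rcases mul_eq_zero.mp h5 with h | h
            · exact h
            · exact absurd (by simpa using h) hx1
          fin_cases m
          · simp [hx0, hy0]
          · simp [div_mul_cancel₀ _ hy1]
    · have hx0 : x 0 ≠ 0 := fun h =>
        hy0 (by rw [← Complex.normSq_eq_zero, ← h0, h, Complex.normSq_zero])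
      set c : ℂ := x 0 / y 0 with hcdef
      have habs : ‖c‖ = 1 := by
        rw [hcdef, norm_div]
        have : ‖x 0‖ = ‖y 0‖ := by
          rw [Complex.norm_def, Complex.norm_def, h0]
        rw [this, div_self (by simpa using hy0)]
      have hcy : x 0 = c * y 0 := by rw [hcdef, div_mul_cancel₀ _ hy0]
      have hcc : (starRingEnd ℂ) c * c = 1 := by
        rw [mul_comm, Complex.mul_conj]
        norm_cast
        rw [← Complex.sq_norm, habs, one_pow]
      refine ⟨c, habs, fun m => ?_⟩
      fin_cases m
      · exact hcy
      · have h3 : c * (starRingEnd ℂ) (x 1) = (starRingEnd ℂ) (y 1) := by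
          apply mul_left_cancel₀ hy0
          linear_combination h2 - (starRingEnd ℂ) (x 1) * hcy
        have h4 : (starRingEnd ℂ) (x 1) = (starRingEnd ℂ) (c * y 1) := by
          rw [_root_.map_mul]
          calc (starRingEnd ℂ) (x 1) = ((starRingEnd ℂ) c * c) * (starRingEnd ℂ) (x 1) := by
                rw [hcc, one_mul]
            _ = (starRingEnd ℂ) c * (starRingEnd ℂ) (y 1) := by rw [mul_assoc, h3]
        exact (starRingEnd ℂ).injective h4
  refine ⟨Complex.arg c, funext fun m => ?_⟩
  have he : Complex.exp (Complex.arg c * Complex.I) = c := by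
    have h6 := Complex.norm_mul_exp_arg_mul_I c
    rwa [hc, Complex.ofReal_one, one_mul] at h6
  rw [he, hx m]

lemma no_inj_of_w (U V : Matrix (Fin 2) (Fin 4) ℝ) (v : Fin 4 → ℝ)
    (hker : (Jmat U V).mulVec v = 0)
    (x y : Fin 2 → ℂ) (hw : ∀ i, wvec x i - wvec y i = v i)
    (hnp : ∀ θ : ℝ, x ≠ fun m => Complex.exp (θ * Complex.I) * y m) :
    ¬ PhaseInjective (frameOf U V) := by
  intro hinj
  have hint : intensity (frameOf U V) x = intensity (frameOf U V) y := by
    rw [intensity_eq, intensity_eq]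
    have hxy : wvec x = wvec y + v := funext fun i => by
      have := hw i
      simp only [Pi.add_apply]
      linarith
    rw [hxy, Matrix.mulVec_add, hker, add_zero]
  obtain ⟨θ, hθ⟩ := hinj x y hint
  exact hnp θ hθ

lemma np_of_coord (x y : Fin 2 → ℂ) (m : Fin 2) (hx : x m ≠ 0) (hy : y m = 0) :
    ∀ θ : ℝ, x ≠ fun k => Complex.exp (θ * Complex.I) * y k :=
  fun θ h => hx (by rw [congrFun h m, hy, mul_zero])

lemma caseA (a p b q : ℝ) (ha : 0 < a) (hD : a * b ≤ p ^ 2 + q ^ 2) :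
    ∃ x y : Fin 2 → ℂ, (∀ i, wvec x i - wvec y i = ![a, p, b, q] i) ∧ x 0 ≠ 0 ∧ y 0 = 0 := by
  set sa := Real.sqrt a with hsa
  have hsa0 : 0 < sa := Real.sqrt_pos.mpr ha
  have hsa2 : sa * sa = a := Real.mul_self_sqrt ha.le
  set β := Real.sqrt ((p ^ 2 + q ^ 2 - a * b) / a) with hβ
  have hβ2 : β * β = (p ^ 2 + q ^ 2 - a * b) / a :=
    Real.mul_self_sqrt (div_nonneg (by linarith) ha.le)
  have hβ2' : a * (β * β) = p ^ 2 + q ^ 2 - a * b := by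
    rw [hβ2]; field_simp
  refine ⟨![(sa : ℂ), ((p / sa : ℝ) : ℂ) - ((q / sa : ℝ) : ℂ) * Complex.I],
    ![0, (β : ℂ)], fun i => ?_, by simpa using hsa0.ne', by simp⟩
  fin_cases i <;>
    simp [wvec, Complex.normSq_apply, Complex.mul_re, Complex.mul_im, Complex.sub_re,
      Complex.sub_im, Complex.add_re, Complex.add_im, Complex.ofReal_re, Complex.ofReal_im,
      Complex.I_re, Complex.I_im, Complex.conj_re, Complex.conj_im]
  · exact hsa2
  · rw [mul_comm]; exact div_mul_cancel₀ p hsa0.ne'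
  · field_simp
    linear_combination (-(β * β) - b) * hsa2 - hβ2'
  · rw [mul_comm]; exact div_mul_cancel₀ q hsa0.ne'

lemma caseB (a p b q : ℝ) (hb : 0 < b) (ha : a = 0) :
    ∃ x y : Fin 2 → ℂ, (∀ i, wvec x i - wvec y i = ![a, p, b, q] i) ∧ x 1 ≠ 0 ∧ y 1 = 0 := by
  set sb := Real.sqrt b with hsb
  have hsb0 : 0 < sb := Real.sqrt_pos.mpr hb
  have hsb2 : sb * sb = b := Real.mul_self_sqrt hb.le
  set β := Real.sqrt ((p ^ 2 + q ^ 2) / b) with hβ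
  have hβ2 : β * β = (p ^ 2 + q ^ 2) / b :=
    Real.mul_self_sqrt (div_nonneg (by positivity) hb.le)
  have hβ2' : b * (β * β) = p ^ 2 + q ^ 2 := by
    rw [hβ2]; field_simp
  refine ⟨![((p / sb : ℝ) : ℂ) + ((q / sb : ℝ) : ℂ) * Complex.I, (sb : ℂ)],
    ![(β : ℂ), 0], fun i => ?_, by simpa using hsb0.ne', by simp⟩
  fin_cases i <;>
    simp [wvec, ha, Complex.normSq_apply, Complex.mul_re, Complex.mul_im, Complex.add_re,
      Complex.add_im, Complex.ofReal_re, Complex.ofReal_im,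
      Complex.I_re, Complex.I_im, Complex.conj_re, Complex.conj_im]
  · field_simp
    have hkey : sb ^ 2 * β ^ 2 = p ^ 2 + q ^ 2 := by
      linear_combination (β * β) * hsb2 + hβ2'
    linarith [hkey]
  · exact div_mul_cancel₀ p hsb0.ne'
  · exact hsb2
  · exact div_mul_cancel₀ q hsb0.ne'

lemma caseC (a p b q : ℝ) (ha : a = 0) (hb : b = 0) (hz : ¬(p = 0 ∧ q = 0)) :
    ∃ x y : Fin 2 → ℂ, (∀ i, wvec x i - wvec y i = ![a, p, b, q] i) ∧
      ∀ θ : ℝ, x ≠ fun m => Complex.exp (θ * Complex.I) * y m := by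
  set r := Real.sqrt (p ^ 2 + q ^ 2) with hr
  have hpq : 0 < p ^ 2 + q ^ 2 := by
    rcases not_and_or.mp hz with h | h <;> positivity
  have hr0 : 0 < r := Real.sqrt_pos.mpr hpq
  have hr2 : r * r = p ^ 2 + q ^ 2 := Real.mul_self_sqrt hpq.le
  set s := Real.sqrt (r / 2) with hs
  have hs0 : 0 < s := Real.sqrt_pos.mpr (by positivity)
  have hs2 : s * s = r / 2 := Real.mul_self_sqrt (by positivity)
  refine ⟨![((p * s / r : ℝ) : ℂ) + ((q * s / r : ℝ) : ℂ) * Complex.I, (s : ℂ)],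
    ![((p * s / r : ℝ) : ℂ) + ((q * s / r : ℝ) : ℂ) * Complex.I, (-s : ℂ)],
    fun i => ?_, fun θ hθ => ?_⟩
  · fin_cases i <;>
      simp [wvec, ha, hb, Complex.normSq_apply, Complex.mul_re, Complex.mul_im, Complex.add_re,
        Complex.add_im, Complex.ofReal_re, Complex.ofReal_im,
        Complex.I_re, Complex.I_im, Complex.conj_re, Complex.conj_im]
    · field_simp
      linear_combination 2 * p * hs2
    · field_simp
      linear_combination 2 * q * hs2
  · have h1 := congrFun hθ 1
    have h0 := congrFun hθ 0
    simp only [Matrix.cons_val_one, Matrix.head_cons, Matrix.cons_val_zero] at h1 h0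
    have hsne : (s : ℂ) ≠ 0 := by exact_mod_cast hs0.ne'
    have hexp : Complex.exp (θ * Complex.I) = -1 := by
      have h7 : (s : ℂ) * (1 + Complex.exp (θ * Complex.I)) = 0 := by
        linear_combination h1
      rcases mul_eq_zero.mp h7 with h | h
      · exact absurd h hsne
      · linear_combination h
    rw [hexp] at h0
    have hw : (((p * s / r : ℝ) : ℂ) + ((q * s / r : ℝ) : ℂ) * Complex.I) = 0 := by
      linear_combination h0 / 2
    have hre : p * s / r = 0 := by
      have := congrArg Complex.re hw
      simpa [Complex.add_re, Complex.mul_re, Complex.ofReal_re, Complex.ofReal_im,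
        Complex.I_re, Complex.I_im] using this
    have him : q * s / r = 0 := by
      have := congrArg Complex.im hw
      simpa [Complex.add_im, Complex.mul_im, Complex.ofReal_re, Complex.ofReal_im,
        Complex.I_re, Complex.I_im] using this
    rw [div_eq_zero_iff] at hre him
    rcases not_and_or.mp hz with h | h
    · rcases hre with h' | h'
      · rcases mul_eq_zero.mp h' with h'' | h''
        · exact h h''
        · exact hs0.ne' h''
      · exact hr0.ne' h'
    · rcases him with h' | h'
      · rcases mul_eq_zero.mp h' with h'' | h''
        · exact h h''
        · exact hs0.ne' h''
      · exact hr0.ne' h'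

lemma frame_zero (U V : Matrix (Fin 2) (Fin 4) ℝ) (a p b q : ℝ) (ha : 0 < a)
    (hD : p ^ 2 + q ^ 2 < a * b)
    (hker : (Jmat U V).mulVec ![a, p, b, q] = 0) :
    ∀ n m, U m n = 0 ∧ V m n = 0 := by
  intro n m
  have hE := congrFun hker n
  simp only [Jmat, Matrix.mulVec, dotProduct, Fin.sum_univ_four, Matrix.of_apply,
    Matrix.cons_val_zero, Matrix.cons_val_one, Matrix.head_cons, Matrix.cons_val_two,
    Matrix.tail_cons, Matrix.cons_val_three, Pi.zero_apply] at hE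
  have h2 : U 1 n ^ 2 + V 1 n ^ 2 ≤ 0 := by
    nlinarith [sq_nonneg (a * U 0 n + p * U 1 n - q * V 1 n),
      sq_nonneg (a * V 0 n + p * V 1 n + q * U 1 n), sq_nonneg (U 1 n), sq_nonneg (V 1 n)]
  have h2' : U 1 n ^ 2 + V 1 n ^ 2 = 0 := le_antisymm h2 (by positivity)
  have hu2 : U 1 n = 0 := by
    have h2a : U 1 n ^ 2 = 0 :=
      le_antisymm (by nlinarith [sq_nonneg (V 1 n)]) (sq_nonneg _)
    exact pow_eq_zero_iff two_ne_zero |>.mp h2a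
  have hv2 : V 1 n = 0 := by
    have h2a : V 1 n ^ 2 = 0 :=
      le_antisymm (by nlinarith [sq_nonneg (U 1 n)]) (sq_nonneg _)
    exact pow_eq_zero_iff two_ne_zero |>.mp h2a
  rw [hu2, hv2] at hE
  ring_nf at hE
  have h1 : U 0 n ^ 2 + V 0 n ^ 2 ≤ 0 := by
    nlinarith [hE, sq_nonneg (U 0 n), sq_nonneg (V 0 n)]
  have hu1 : U 0 n = 0 := by
    have h2a : U 0 n ^ 2 = 0 :=
      le_antisymm (by nlinarith [sq_nonneg (V 0 n)]) (sq_nonneg _)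
    exact pow_eq_zero_iff two_ne_zero |>.mp h2a
  have hv1 : V 0 n = 0 := by
    have h2a : V 0 n ^ 2 = 0 :=
      le_antisymm (by nlinarith [sq_nonneg (U 0 n)]) (sq_nonneg _)
    exact pow_eq_zero_iff two_ne_zero |>.mp h2a
  fin_cases m
  · exact ⟨hu1, hv1⟩
  · exact ⟨hu2, hv2⟩

theorem phaseInjective_iff_det_ne_zero (U V : Matrix (Fin 2) (Fin 4) ℝ) :
    PhaseInjective (frameOf U V) ↔
      (Matrix.of fun n : Fin 4 =>
        ![U 0 n ^ 2 + V 0 n ^ 2,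
          2 * (U 0 n * U 1 n + V 0 n * V 1 n),
          U 1 n ^ 2 + V 1 n ^ 2,
          2 * (U 1 n * V 0 n - U 0 n * V 1 n)]).det ≠ 0 := by
  change PhaseInjective (frameOf U V) ↔ (Jmat U V).det ≠ 0
  constructor
  · intro hinj
    by_contra hdet
    obtain ⟨v, hv0, hvker⟩ := Matrix.exists_mulVec_eq_zero_iff.mpr hdet
    set a := v 0 with hadef
    set p := v 1 with hpdef
    set b := v 2 with hbdef
    set q := v 3 with hqdef
    have hveq : v = ![a, p, b, q] := by
      funext i; fin_cases i <;> rfl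
    rw [hveq] at hvker hv0
    have hnegker : (Jmat U V).mulVec ![-a, -p, -b, -q] = 0 := by
      have : (![-a, -p, -b, -q] : Fin 4 → ℝ) = -![a, p, b, q] := by
        funext i; fin_cases i <;> simp
      rw [this, Matrix.mulVec_neg, hvker, neg_zero]
    rcases le_or_gt (a * b) (p ^ 2 + q ^ 2) with hD | hD
    · rcases lt_trichotomy a 0 with h | h | h
      · obtain ⟨x, y, hw, hx0, hy0⟩ := caseA (-a) (-p) (-b) (-q) (by linarith) (by nlinarith)
        exact no_inj_of_w U V _ hnegker x y hw (np_of_coord x y 0 hx0 hy0) hinj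
      · rcases lt_trichotomy b 0 with hb | hb | hb
        · obtain ⟨x, y, hw, hx1, hy1⟩ := caseB (-a) (-p) (-b) (-q) (by linarith) (by rw [h]; ring)
          exact no_inj_of_w U V _ hnegker x y hw (np_of_coord x y 1 hx1 hy1) hinj
        · have hz : ¬(p = 0 ∧ q = 0) := by
            rintro ⟨hp, hq⟩
            apply hv0
            funext i; fin_cases i <;> simp [h, hb, hp, hq]
          obtain ⟨x, y, hw, hnp⟩ := caseC a p b q h hb hz
          exact no_inj_of_w U V _ hvker x y hw hnp hinj
        · obtain ⟨x, y, hw, hx1, hy1⟩ := caseB a p b q hb h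
          exact no_inj_of_w U V _ hvker x y hw (np_of_coord x y 1 hx1 hy1) hinj
      · obtain ⟨x, y, hw, hx0, hy0⟩ := caseA a p b q h hD
        exact no_inj_of_w U V _ hvker x y hw (np_of_coord x y 0 hx0 hy0) hinj
    · have hfz : ∀ n m, U m n = 0 ∧ V m n = 0 := by
        rcases lt_trichotomy a 0 with h | h | h
        · exact frame_zero U V (-a) (-p) (-b) (-q) (by linarith) (by nlinarith) hnegker
        · exfalso; rw [h] at hD; nlinarith [sq_nonneg p, sq_nonneg q]
        · exact frame_zero U V a p b q h hD hvker
      have hzero : ∀ z : Fin 2 → ℂ, intensity (frameOf U V) z = fun _ => 0 := by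
        intro z
        funext n
        simp [intensity, frameOf, Fin.sum_univ_two, (hfz n 0).1, (hfz n 0).2,
          (hfz n 1).1, (hfz n 1).2]
      obtain ⟨θ, hθ⟩ := hinj ![1, 0] ![0, 1] (by rw [hzero, hzero])
      have h00 := congrFun hθ 0
      simp at h00
  · intro hdet x y hxy
    have hmv : (Jmat U V).mulVec (wvec x) = (Jmat U V).mulVec (wvec y) := by
      rw [← intensity_eq, ← intensity_eq, hxy]
    have hww : wvec x = wvec y := by
      by_contra hne
      apply hdet
      rw [← Matrix.exists_mulVec_eq_zero_iff]
      refine ⟨wvec x - wvec y, sub_ne_zero.mpr hne, ?_⟩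
      rw [Matrix.mulVec_sub, hmv, sub_self]
    have e0 := congrFun hww 0
    have e1 := congrFun hww 1
    have e2 := congrFun hww 2
    have e3 := congrFun hww 3
    simp only [wvec, Matrix.cons_val_zero, Matrix.cons_val_one, Matrix.head_cons,
      Matrix.cons_val_two, Matrix.tail_cons, Matrix.cons_val_three] at e0 e1 e2 e3
    exact phase_lemma x y e0 e2 (Complex.ext e1 e3)
end

section
/- For any M ≥ 1 and N ≥ 1, the set of collections Φ = (φ₁, …, φ_N) of vectors in ℂ^M (identified with points of ℂ^{M×N}) for which the intensity measurement map 𝒜_Φ is not injective on ℂ^M/S¹ is closed in the Euclidean topology on ℂ^{M×N}. -/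
open Matrix Complex MvPolynomial Finset

namespace PhaseAux

noncomputable def inn {M : ℕ} (x y : Fin M → ℂ) : ℂ :=
  ∑ m, x m * (starRingEnd ℂ) (y m)

lemma inn_conj {M : ℕ} (x y : Fin M → ℂ) : inn y x = (starRingEnd ℂ) (inn x y) := by
  rw [inn, inn, map_sum]
  exact Finset.sum_congr rfl fun m _ => by
    rw [_root_.map_mul, Complex.conj_conj]; ring

lemma inn_self {M : ℕ} (x : Fin M → ℂ) :
    inn x x = ((∑ m, Complex.normSq (x m) : ℝ) : ℂ) := by
  simp only [inn]
  push_cast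
  exact Finset.sum_congr rfl fun m _ => (Complex.mul_conj (x m))

lemma inn_comb {M : ℕ} (α β γ δ : ℂ) (x y : Fin M → ℂ) :
    inn (fun m => α * x m + β * y m) (fun m => γ * x m + δ * y m) =
      α * (starRingEnd ℂ) γ * inn x x + α * (starRingEnd ℂ) δ * inn x y +
      β * (starRingEnd ℂ) γ * inn y x + β * (starRingEnd ℂ) δ * inn y y := by
  have h : ∀ m, (α * x m + β * y m) * (starRingEnd ℂ) (γ * x m + δ * y m) =
      α * (starRingEnd ℂ) γ * (x m * (starRingEnd ℂ) (x m)) +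
      α * (starRingEnd ℂ) δ * (x m * (starRingEnd ℂ) (y m)) +
      β * (starRingEnd ℂ) γ * (y m * (starRingEnd ℂ) (x m)) +
      β * (starRingEnd ℂ) δ * (y m * (starRingEnd ℂ) (y m)) := by
    intro m; simp only [map_add, _root_.map_mul]; ring
  simp only [inn]
  simp_rw [h, Finset.sum_add_distrib, Finset.mul_sum]

lemma inn_smul {M : ℕ} (u v : ℂ) (x y : Fin M → ℂ) :
    inn (fun m => u * x m) (fun m => v * y m) = u * (starRingEnd ℂ) v * inn x y := by
  simp only [inn, _root_.map_mul, Finset.mul_sum]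
  exact Finset.sum_congr rfl fun m _ => by ring

lemma inn_smul_left {M : ℕ} (u : ℂ) (x y : Fin M → ℂ) :
    inn (fun m => u * x m) y = u * inn x y := by
  simp only [inn, Finset.mul_sum]
  exact Finset.sum_congr rfl fun m _ => by ring

lemma intensity_eq_normSq {M N : ℕ} (Φ : Fin N → Fin M → ℂ) (x : Fin M → ℂ) (n : Fin N) :
    intensity Φ x n = Complex.normSq (inn x (Φ n)) := by
  rw [intensity, inn, Complex.sq_norm]

/-- The intensity difference only depends on `x x* - y y*`. -/
lemma meas_diff {M : ℕ} (x y x' y' : Fin M → ℂ)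
    (h : ∀ m m', x m * (starRingEnd ℂ) (x m') - y m * (starRingEnd ℂ) (y m') =
      x' m * (starRingEnd ℂ) (x' m') - y' m * (starRingEnd ℂ) (y' m'))
    (φ : Fin M → ℂ) :
    (Complex.normSq (inn x φ) : ℂ) - Complex.normSq (inn y φ) =
      (Complex.normSq (inn x' φ) : ℂ) - Complex.normSq (inn y' φ) := by
  have expand : ∀ u : Fin M → ℂ, (Complex.normSq (inn u φ) : ℂ) =
      ∑ m, ∑ m', (u m * (starRingEnd ℂ) (u m')) * ((starRingEnd ℂ) (φ m) * φ m') := by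
    intro u
    rw [← Complex.mul_conj (inn u φ), ← inn_conj u φ, inn, inn, Finset.sum_mul_sum]
    exact Finset.sum_congr rfl fun m _ => Finset.sum_congr rfl fun m' _ => by ring
  have step : ∀ u v : Fin M → ℂ, (Complex.normSq (inn u φ) : ℂ) - Complex.normSq (inn v φ) =
      ∑ m, ∑ m', (u m * (starRingEnd ℂ) (u m') - v m * (starRingEnd ℂ) (v m')) *
        ((starRingEnd ℂ) (φ m) * φ m') := by
    intro u v
    rw [expand u, expand v, ← Finset.sum_sub_distrib]
    refine Finset.sum_congr rfl fun m _ => ?_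
    rw [← Finset.sum_sub_distrib]
    exact Finset.sum_congr rfl fun m' _ => by ring
  rw [step x y, step x' y']
  exact Finset.sum_congr rfl fun m _ => Finset.sum_congr rfl fun m' _ => by rw [h]

/-- If `x x* = y y*` entrywise then `x` and `y` agree up to phase. -/
lemma phase_of_rank_one_eq {M : ℕ} (x y : Fin M → ℂ)
    (h : ∀ m m', x m * (starRingEnd ℂ) (x m') = y m * (starRingEnd ℂ) (y m')) :
    ∃ θ : ℝ, x = fun m => Complex.exp (θ * Complex.I) * y m := by
  by_cases hy : y = 0
  · refine ⟨0, funext fun m => ?_⟩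
    have h0 : x m * (starRingEnd ℂ) (x m) = 0 := by rw [h m m, hy]; simp
    rw [Complex.mul_conj] at h0
    have : x m = 0 := by
      rw [← Complex.normSq_eq_zero]
      exact_mod_cast h0
    simp [this, hy]
  · obtain ⟨m₀, hm₀⟩ : ∃ m₀, y m₀ ≠ 0 := by
      by_contra hc; push_neg at hc; exact hy (funext hc)
    have hx0 : x m₀ ≠ 0 := by
      intro h0
      have h00 := h m₀ m₀
      rw [h0, Complex.mul_conj, Complex.mul_conj] at h00
      simp only [zero_mul, map_zero] at h00
      have : Complex.normSq (y m₀) = 0 := by exact_mod_cast h00.symm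
      exact hm₀ (Complex.normSq_eq_zero.mp this)
    set u : ℂ := (starRingEnd ℂ) (y m₀) / (starRingEnd ℂ) (x m₀) with hu
    have habs : ‖u‖ = 1 := by
      have hnorm : Complex.normSq (x m₀) = Complex.normSq (y m₀) := by
        have := h m₀ m₀
        rw [Complex.mul_conj, Complex.mul_conj] at this
        exact_mod_cast this
      rw [hu, norm_div]
      simp only [Complex.norm_conj]
      rw [div_eq_one_iff_eq (by simpa using hx0)]
      have : ‖y m₀‖ ^ 2 = ‖x m₀‖ ^ 2 := by
        rw [Complex.sq_norm, Complex.sq_norm, hnorm]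
      nlinarith [norm_nonneg (x m₀), norm_nonneg (y m₀)]
    refine ⟨Complex.arg u, funext fun m => ?_⟩
    have hexp : Complex.exp ((Complex.arg u : ℂ) * Complex.I) = u := by
      have := Complex.norm_mul_exp_arg_mul_I u
      rwa [habs, Complex.ofReal_one, one_mul] at this
    rw [hexp]
    -- from h m₀ m : x m₀ * conj (x m) = y m₀ * conj (y m), conjugate and divide
    have hc := congrArg (starRingEnd ℂ) (h m₀ m)
    simp only [_root_.map_mul, Complex.conj_conj] at hc
    -- hc : conj (x m₀) * x m = conj (y m₀) * y m
    have hcx : (starRingEnd ℂ) (x m₀) ≠ 0 := by simpa using hx0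
    rw [hu, div_mul_eq_mul_div, eq_div_iff hcx]
    linear_combination hc


/-- Solve the hyperbolic rotation parameters. -/
lemma hyper (r s : ℝ) (hr : 0 ≤ r) (h : 2 * r < s) :
    ∃ c sh : ℝ, c ^ 2 - sh ^ 2 = 1 ∧ r * (c ^ 2 + sh ^ 2) = c * sh * s := by
  have hq0 : 0 < (s + 2 * r) / (s - 2 * r) := div_pos (by linarith) (by linarith)
  set q := Real.sqrt ((s + 2 * r) / (s - 2 * r)) with hqdef
  have hq : 0 < q := Real.sqrt_pos.mpr hq0
  have hq2 : q ^ 2 = (s + 2 * r) / (s - 2 * r) := Real.sq_sqrt hq0.le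
  set p := Real.sqrt q with hpdef
  have hp : 0 < p := Real.sqrt_pos.mpr hq
  have hp2 : p ^ 2 = q := Real.sq_sqrt hq.le
  refine ⟨(p + p⁻¹) / 2, (p - p⁻¹) / 2, by field_simp; ring, ?_⟩
  have hkey : q ^ 2 * (s - 2 * r) = s + 2 * r := by
    rw [hq2, div_mul_cancel₀ _ (by linarith : s - 2 * r ≠ 0)]
  have h2 : 2 * r * (q ^ 2 + 1) = s * (q ^ 2 - 1) := by linear_combination -hkey
  have hp4 : p ^ 4 = q ^ 2 := by rw [← hp2]; ring
  have hpne : p ≠ 0 := hp.ne'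
  field_simp
  linear_combination h2 + (2 * r - s) * hp4

noncomputable def bad {M N : ℕ} (Φ : Fin N → Fin M → ℂ) : Prop :=
  ∃ x y : Fin M → ℂ, inn x y = 0 ∧
    (∑ m, Complex.normSq (x m)) ^ 2 + (∑ m, Complex.normSq (y m)) ^ 2 = 1 ∧
    intensity Φ x = intensity Φ y

lemma not_phaseInjective_of_bad {M N : ℕ} (Φ : Fin N → Fin M → ℂ) (h : bad Φ) :
    ¬ PhaseInjective Φ := by
  obtain ⟨x, y, h1, h2, h3⟩ := h
  intro hPI
  obtain ⟨θ, hx⟩ := hPI x y h3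
  have hxy : inn x y = Complex.exp (θ * Complex.I) * inn y y := by
    rw [hx]; exact inn_smul_left _ y y
  rw [h1] at hxy
  have hyy : inn y y = 0 := by
    rcases mul_eq_zero.mp hxy.symm with h' | h'
    · exact absurd h' (Complex.exp_ne_zero _)
    · exact h'
  have hy0 : ∀ m, y m = 0 := by
    rw [inn_self] at hyy
    have hsum : (∑ m, Complex.normSq (y m)) = 0 := by exact_mod_cast hyy
    intro m
    have := (Finset.sum_eq_zero_iff_of_nonneg
      (fun m _ => Complex.normSq_nonneg (y m))).mp hsum m (Finset.mem_univ m)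
    exact Complex.normSq_eq_zero.mp this
  have hx0 : ∀ m, x m = 0 := fun m => by rw [hx]; simp [hy0 m]
  rw [Finset.sum_eq_zero (fun m _ => by rw [hx0 m]; simp),
      Finset.sum_eq_zero (fun m _ => by rw [hy0 m]; simp)] at h2
  norm_num at h2

lemma bad_of_not_phaseInjective {M N : ℕ} (Φ : Fin N → Fin M → ℂ)
    (h : ¬ PhaseInjective Φ) : bad Φ := by
  rw [PhaseInjective] at h
  push_neg at h
  obtain ⟨x, y, hint, hnp⟩ := h
  set a := ∑ m, Complex.normSq (x m) with hadef
  set b := ∑ m, Complex.normSq (y m) with hbdef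
  set r := ‖inn x y‖ with hrdef
  have hr : 0 ≤ r := norm_nonneg _
  set w : ℂ := if inn x y = 0 then 1 else inn x y / (r : ℂ) with hwdef
  have habsw : ‖w‖ = 1 := by
    by_cases h0 : inn x y = 0
    · simp [hwdef, h0]
    · have hrne : r ≠ 0 := by simpa [hrdef] using h0
      rw [hwdef, if_neg h0, norm_div, Complex.norm_of_nonneg hr, ← hrdef,
        div_self hrne]
  have hw1 : w * (starRingEnd ℂ) w = 1 := by
    rw [Complex.mul_conj, Complex.normSq_eq_norm_sq, habsw]; norm_num
  have hrw : (r : ℂ) * w = inn x y := by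
    by_cases h0 : inn x y = 0
    · simp [hwdef, h0, hrdef]
    · have hrne : (r : ℂ) ≠ 0 := by
        simpa [hrdef, Complex.ofReal_eq_zero] using h0
      rw [hwdef, if_neg h0, mul_div_cancel₀ _ hrne]
  have hyx : inn y x = (r : ℂ) * (starRingEnd ℂ) w := by
    rw [inn_conj, ← hrw, _root_.map_mul, Complex.conj_ofReal]
  -- strict Cauchy-Schwarz-type inequality
  have hs2r : 2 * r < a + b := by
    by_contra hle
    push_neg at hle
    have hvv : inn (fun m => 1 * x m + (-w) * y m) (fun m => 1 * x m + (-w) * y m)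
        = ((a + b - 2 * r : ℝ) : ℂ) := by
      rw [inn_comb, inn_self x, inn_self y, ← hrw, hyx, ← hadef, ← hbdef]
      push_cast
      simp only [_root_.map_one, map_neg]
      linear_combination ((b : ℂ) - 2 * (r : ℂ)) * hw1
    have hvv2 : inn (fun m => 1 * x m + (-w) * y m) (fun m => 1 * x m + (-w) * y m)
        = ((∑ m, Complex.normSq (1 * x m + (-w) * y m) : ℝ) : ℂ) := inn_self _
    have hsum : (∑ m, Complex.normSq (1 * x m + (-w) * y m)) = a + b - 2 * r := by
      exact_mod_cast hvv2.symm.trans hvv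
    have hzero : ∀ m, (1 : ℂ) * x m + (-w) * y m = 0 := by
      intro m
      have hle2 : (∑ m, Complex.normSq (1 * x m + (-w) * y m)) ≤ 0 := by
        rw [hsum]; linarith
      have hge : 0 ≤ (∑ m, Complex.normSq (1 * x m + (-w) * y m)) :=
        Finset.sum_nonneg fun m _ => Complex.normSq_nonneg _
      have := (Finset.sum_eq_zero_iff_of_nonneg
        (fun m _ => Complex.normSq_nonneg _)).mp (le_antisymm hle2 hge) m (Finset.mem_univ m)
      exact Complex.normSq_eq_zero.mp this
    have hexp : Complex.exp ((Complex.arg w : ℂ) * Complex.I) = w := by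
      have := Complex.norm_mul_exp_arg_mul_I w
      rwa [habsw, Complex.ofReal_one, one_mul] at this
    exact hnp (Complex.arg w) (funext fun m => by
      rw [hexp]
      have := hzero m
      linear_combination this)
  -- some entry of x x* - y y* is nonzero
  have hQ : ∃ m₁ m₂, x m₁ * (starRingEnd ℂ) (x m₂) ≠ y m₁ * (starRingEnd ℂ) (y m₂) := by
    by_contra hc
    push_neg at hc
    obtain ⟨θ, hθ⟩ := phase_of_rank_one_eq x y hc
    exact hnp θ hθ
  obtain ⟨m₁, m₂, hne⟩ := hQ
  -- hyperbolic rotation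
  obtain ⟨c, sh, hc1, hmain⟩ := hyper r (a + b) hr hs2r
  set x' : Fin M → ℂ := fun m => (c : ℂ) * x m + (-(sh : ℂ) * w) * y m with hx'def
  set y' : Fin M → ℂ := fun m => (-(sh : ℂ) * (starRingEnd ℂ) w) * x m + (c : ℂ) * y m
    with hy'def
  have hc1C : (c : ℂ) ^ 2 - (sh : ℂ) ^ 2 = 1 := by exact_mod_cast hc1
  have hmainC : (r : ℂ) * ((c : ℂ) ^ 2 + (sh : ℂ) ^ 2) = (c : ℂ) * (sh : ℂ) * ((a : ℂ) + (b : ℂ)) := by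
    exact_mod_cast hmain
  have hortho : inn x' y' = 0 := by
    rw [hx'def, hy'def, inn_comb, inn_self x, inn_self y, ← hrw, hyx, ← hadef, ← hbdef]
    simp only [_root_.map_mul, map_neg, Complex.conj_ofReal, Complex.conj_conj]
    linear_combination w * hmainC + (sh : ℂ) ^ 2 * (r : ℂ) * w * hw1
  have hQeq : ∀ m m', x' m * (starRingEnd ℂ) (x' m') - y' m * (starRingEnd ℂ) (y' m') =
      x m * (starRingEnd ℂ) (x m') - y m * (starRingEnd ℂ) (y m') := by
    intro m m'
    rw [hx'def, hy'def]
    simp only [map_add, _root_.map_mul, map_neg, Complex.conj_ofReal, Complex.conj_conj]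
    linear_combination (x m * (starRingEnd ℂ) (x m') - y m * (starRingEnd ℂ) (y m')) * hc1C -
      (sh : ℂ) ^ 2 * (x m * (starRingEnd ℂ) (x m') - y m * (starRingEnd ℂ) (y m')) * hw1
  have hint' : ∀ n, Complex.normSq (inn x' (Φ n)) = Complex.normSq (inn y' (Φ n)) := by
    intro n
    have hd := meas_diff x' y' x y hQeq (Φ n)
    have h0 : Complex.normSq (inn x (Φ n)) = Complex.normSq (inn y (Φ n)) := by
      have := congrFun hint n
      rwa [intensity_eq_normSq, intensity_eq_normSq] at this
    have : (Complex.normSq (inn x' (Φ n)) : ℂ) - Complex.normSq (inn y' (Φ n)) = 0 := by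
      rw [hd, h0]; ring
    have h2 := sub_eq_zero.mp this
    exact_mod_cast h2
  -- nondegeneracy
  set a' := ∑ m, Complex.normSq (x' m) with ha'def
  set b' := ∑ m, Complex.normSq (y' m) with hb'def
  have ha'0 : 0 ≤ a' := Finset.sum_nonneg fun m _ => Complex.normSq_nonneg _
  have hb'0 : 0 ≤ b' := Finset.sum_nonneg fun m _ => Complex.normSq_nonneg _
  have hA : 0 < a' ^ 2 + b' ^ 2 := by
    rcases lt_or_eq_of_le (by positivity : (0:ℝ) ≤ a' ^ 2 + b' ^ 2) with h' | h'
    · exact h'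
    exfalso
    have ha' : a' = 0 := by nlinarith
    have hb' : b' = 0 := by nlinarith
    have hx'0 : ∀ m, x' m = 0 := by
      intro m
      have hsum : (∑ m, Complex.normSq (x' m)) = 0 := by rw [← ha'def]; exact ha'
      exact Complex.normSq_eq_zero.mp
        ((Finset.sum_eq_zero_iff_of_nonneg (fun m _ => Complex.normSq_nonneg _)).mp
          hsum m (Finset.mem_univ m))
    have hy'0 : ∀ m, y' m = 0 := by
      intro m
      have hsum : (∑ m, Complex.normSq (y' m)) = 0 := by rw [← hb'def]; exact hb'
      exact Complex.normSq_eq_zero.mp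
        ((Finset.sum_eq_zero_iff_of_nonneg (fun m _ => Complex.normSq_nonneg _)).mp
          hsum m (Finset.mem_univ m))
    have h00 := hQeq m₁ m₂
    rw [hx'0 m₁, hy'0 m₁, zero_mul, zero_mul, sub_self] at h00
    exact hne (sub_eq_zero.mp h00.symm)
  -- normalize
  set t := (Real.sqrt (Real.sqrt (a' ^ 2 + b' ^ 2)))⁻¹ with htdef
  have hsA : Real.sqrt (Real.sqrt (a' ^ 2 + b' ^ 2)) ≠ 0 :=
    (Real.sqrt_pos.mpr (Real.sqrt_pos.mpr hA)).ne'
  have hA4 : (Real.sqrt (Real.sqrt (a' ^ 2 + b' ^ 2))) ^ 4 = a' ^ 2 + b' ^ 2 := by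
    calc (Real.sqrt (Real.sqrt (a' ^ 2 + b' ^ 2))) ^ 4
        = ((Real.sqrt (Real.sqrt (a' ^ 2 + b' ^ 2))) ^ 2) ^ 2 := by ring
      _ = (Real.sqrt (a' ^ 2 + b' ^ 2)) ^ 2 := by rw [Real.sq_sqrt (Real.sqrt_nonneg _)]
      _ = a' ^ 2 + b' ^ 2 := Real.sq_sqrt hA.le
  have ht4 : t ^ 4 * (a' ^ 2 + b' ^ 2) = 1 := by
    rw [htdef, inv_pow, hA4]
    exact inv_mul_cancel₀ hA.ne'
  refine ⟨fun m => (t : ℂ) * x' m, fun m => (t : ℂ) * y' m, ?_, ?_, ?_⟩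
  · rw [inn_smul, hortho, mul_zero]
  · have hns : ∀ z : ℂ, Complex.normSq ((t : ℂ) * z) = t ^ 2 * Complex.normSq z := by
      intro z; rw [Complex.normSq_mul, Complex.normSq_ofReal]; ring
    simp only [hns, ← Finset.mul_sum, ← ha'def, ← hb'def]
    linear_combination ht4
  · funext n
    rw [intensity_eq_normSq, intensity_eq_normSq, inn_smul_left, inn_smul_left,
      Complex.normSq_mul, Complex.normSq_mul, hint' n]

end PhaseAux

theorem isClosed_non_injective_frames (M N : ℕ) (hM : 1 ≤ M) (hN : 1 ≤ N) :
    IsClosed {Φ : Fin N → Fin M → ℂ | ¬ PhaseInjective Φ} := by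
  classical
  have hset : {Φ : Fin N → Fin M → ℂ | ¬ PhaseInjective Φ} = {Φ | PhaseAux.bad Φ} :=
    Set.ext fun Φ =>
      ⟨PhaseAux.bad_of_not_phaseInjective Φ, PhaseAux.not_phaseInjective_of_bad Φ⟩
  rw [hset]
  set K : Set ((Fin M → ℂ) × (Fin M → ℂ)) :=
    {z | PhaseAux.inn z.1 z.2 = 0 ∧
      (∑ m, Complex.normSq (z.1 m)) ^ 2 + (∑ m, Complex.normSq (z.2 m)) ^ 2 = 1} with hKdef
  have hc1 : Continuous fun z : (Fin M → ℂ) × (Fin M → ℂ) => PhaseAux.inn z.1 z.2 := by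
    unfold PhaseAux.inn
    exact continuous_finset_sum _ fun m _ =>
      (((continuous_apply m).comp continuous_fst).mul
        (Complex.continuous_conj.comp ((continuous_apply m).comp continuous_snd)))
  have hc2 : Continuous fun z : (Fin M → ℂ) × (Fin M → ℂ) =>
      (∑ m, Complex.normSq (z.1 m)) ^ 2 + (∑ m, Complex.normSq (z.2 m)) ^ 2 :=
    (((continuous_finset_sum _ fun m _ =>
        Complex.continuous_normSq.comp ((continuous_apply m).comp continuous_fst)).pow 2).add
      ((continuous_finset_sum _ fun m _ =>
        Complex.continuous_normSq.comp ((continuous_apply m).comp continuous_snd)).pow 2))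
  have hKclosed : IsClosed K :=
    (isClosed_eq hc1 continuous_const).inter (isClosed_eq hc2 continuous_const)
  have hKsub : K ⊆ Metric.closedBall 0 1 := by
    rintro ⟨zx, zy⟩ ⟨h1, h2⟩
    rw [Metric.mem_closedBall, dist_zero_right, Prod.norm_def]
    have key : ∀ u : Fin M → ℂ, (∑ m, Complex.normSq (u m)) ≤ 1 → ‖u‖ ≤ 1 := by
      intro u hu
      rw [pi_norm_le_iff_of_nonneg zero_le_one]
      intro m
      have h3 : Complex.normSq (u m) ≤ 1 :=
        le_trans (Finset.single_le_sum (fun m _ => Complex.normSq_nonneg (u m))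
          (Finset.mem_univ m)) hu
      nlinarith [Complex.sq_norm (u m), norm_nonneg (u m)]
    have hx0 : 0 ≤ ∑ m, Complex.normSq (zx m) :=
      Finset.sum_nonneg fun m _ => Complex.normSq_nonneg _
    have hy0 : 0 ≤ ∑ m, Complex.normSq (zy m) :=
      Finset.sum_nonneg fun m _ => Complex.normSq_nonneg _
    have hx1 : (∑ m, Complex.normSq (zx m)) ≤ 1 := by nlinarith
    have hy1 : (∑ m, Complex.normSq (zy m)) ≤ 1 := by nlinarith
    exact max_le (key zx hx1) (key zy hy1)
  have hKcpt : IsCompact K :=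
    (isCompact_closedBall (0 : (Fin M → ℂ) × (Fin M → ℂ)) 1).of_isClosed_subset
      hKclosed hKsub
  haveI : CompactSpace K := isCompact_iff_compactSpace.mp hKcpt
  have himg : {Φ : Fin N → Fin M → ℂ | PhaseAux.bad Φ} =
      Prod.fst '' {q : (Fin N → Fin M → ℂ) × K |
        intensity q.1 (q.2 : (Fin M → ℂ) × (Fin M → ℂ)).1 =
          intensity q.1 (q.2 : (Fin M → ℂ) × (Fin M → ℂ)).2} := by
    ext Φ
    simp only [Set.mem_setOf_eq, Set.mem_image, PhaseAux.bad]
    constructor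
    · rintro ⟨x, y, h1, h2, h3⟩
      exact ⟨(Φ, ⟨(x, y), ⟨h1, h2⟩⟩), h3, rfl⟩
    · rintro ⟨⟨Φ', z⟩, hz, rfl⟩
      exact ⟨(z : (Fin M → ℂ) × (Fin M → ℂ)).1, (z : (Fin M → ℂ) × (Fin M → ℂ)).2,
        z.2.1, z.2.2, hz⟩
  rw [himg]
  apply isClosedMap_fst_of_compactSpace
  apply isClosed_eq
  · apply continuous_pi; intro n
    unfold intensity
    exact (continuous_norm.comp (continuous_finset_sum _ fun m _ =>
      ((continuous_apply m).comp (continuous_fst.comp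
        (continuous_subtype_val.comp continuous_snd))).mul
      (Complex.continuous_conj.comp ((continuous_apply m).comp
        ((continuous_apply n).comp continuous_fst))))).pow 2
  · apply continuous_pi; intro n
    unfold intensity
    exact (continuous_norm.comp (continuous_finset_sum _ fun m _ =>
      ((continuous_apply m).comp (continuous_snd.comp
        (continuous_subtype_val.comp continuous_snd))).mul
      (Complex.continuous_conj.comp ((continuous_apply m).comp
        ((continuous_apply n).comp continuous_fst))))).pow 2
end

section
/- Let M = 2^k + 1 for some integer k ≥ 0. Then the product ∏_{i=0}^{M−3} binom(2+i, 2) divides the product ∏_{i=0}^{M−3} binom(M+i, 2), and the quotient d_{M,2} = ∏_{i=0}^{M−3} binom(M+i,2) / binom(2+i,2) is an odd integer. (Here d_{M,2} is the degree of the variety of M×M complex matrices of rank at most 2; for M = 2 the empty product gives d_{2,2} = 1.) -/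
open Matrix Complex MvPolynomial Finset

private lemma chooseTwoMul (j : ℕ) : Nat.choose (j + 2) 2 * 2 = (j + 2) * (j + 1) := by
  refine Nat.eq_of_mul_eq_mul_right (Nat.factorial_pos j) ?_
  have h := Nat.choose_mul_factorial_mul_factorial (show 2 ≤ j + 2 by omega)
  have h2 : j + 2 - 2 = j := by omega
  rw [h2] at h
  calc Nat.choose (j + 2) 2 * 2 * Nat.factorial j
      = Nat.choose (j + 2) 2 * Nat.factorial 2 * Nat.factorial j := by norm_num [Nat.factorial]
    _ = Nat.factorial (j + 2) := h
    _ = (j + 2) * ((j + 1) * Nat.factorial j) := by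
        rw [Nat.factorial_succ, Nat.factorial_succ]
    _ = (j + 2) * (j + 1) * Nat.factorial j := by ring

private lemma prodB (n : ℕ) :
    (∏ i ∈ Finset.range n, Nat.choose (2 + i) 2) * 2 ^ n =
      Nat.factorial (n + 1) * Nat.factorial n := by
  induction n with
  | zero => simp
  | succ n ih =>
    rw [Finset.prod_range_succ, pow_succ]
    have key : Nat.choose (2 + n) 2 * 2 = (n + 2) * (n + 1) := by
      rw [show 2 + n = n + 2 by omega]; exact chooseTwoMul n
    calc (∏ i ∈ Finset.range n, Nat.choose (2 + i) 2) * Nat.choose (2 + n) 2 * (2 ^ n * 2)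
        = ((∏ i ∈ Finset.range n, Nat.choose (2 + i) 2) * 2 ^ n) *
            (Nat.choose (2 + n) 2 * 2) := by ring
      _ = Nat.factorial (n + 1) * Nat.factorial n * ((n + 2) * (n + 1)) := by rw [ih, key]
      _ = Nat.factorial (n + 1 + 1) * Nat.factorial (n + 1) := by
          rw [Nat.factorial_succ (n + 1), Nat.factorial_succ n]; ring

private lemma prodA (m n : ℕ) :
    (∏ i ∈ Finset.range n, Nat.choose (m + 2 + i) 2) * 2 ^ n *
        (Nat.factorial (m + 1) * Nat.factorial m) =
      Nat.factorial (m + n + 1) * Nat.factorial (m + n) := by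
  induction n with
  | zero => simp
  | succ n ih =>
    rw [Finset.prod_range_succ, pow_succ]
    have key : Nat.choose (m + 2 + n) 2 * 2 = (m + n + 2) * (m + n + 1) := by
      rw [show m + 2 + n = (m + n) + 2 by omega]; exact chooseTwoMul (m + n)
    calc (∏ i ∈ Finset.range n, Nat.choose (m + 2 + i) 2) * Nat.choose (m + 2 + n) 2 *
            (2 ^ n * 2) * (Nat.factorial (m + 1) * Nat.factorial m)
        = ((∏ i ∈ Finset.range n, Nat.choose (m + 2 + i) 2) * 2 ^ n *
            (Nat.factorial (m + 1) * Nat.factorial m)) * (Nat.choose (m + 2 + n) 2 * 2) := by ring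
      _ = Nat.factorial (m + n + 1) * Nat.factorial (m + n) * ((m + n + 2) * (m + n + 1)) := by
          rw [ih, key]
      _ = Nat.factorial (m + (n + 1) + 1) * Nat.factorial (m + (n + 1)) := by
          rw [show m + (n + 1) + 1 = (m + n + 1) + 1 by omega, show m + (n + 1) = (m + n) + 1 by omega,
            Nat.factorial_succ (m + n + 1), Nat.factorial_succ (m + n)]
          ring

private lemma oddIffCast (a : ℕ) : Odd a ↔ (a : ZMod 2) = 1 := by
  rw [Nat.odd_iff, ← ZMod.natCast_mod a 2]
  rcases Nat.mod_two_eq_zero_or_one a with h | h <;> rw [h] <;> simp <;> decide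

private lemma catalanParity (n : ℕ) :
    ((catalan (2 * n + 1) : ZMod 2)) = (catalan n : ZMod 2) := by
  have h : catalan (2 * n + 1) = ∑ i ∈ Finset.range (2 * n + 1), catalan i * catalan (2 * n - i) := by
    rw [show 2 * n + 1 = (2 * n) + 1 from rfl, catalan_succ]
    exact Fin.sum_univ_eq_sum_range (fun i => catalan i * catalan (2 * n - i)) (2 * n + 1)
  rw [h]
  push_cast
  set f : ℕ → ZMod 2 := fun i => (catalan i : ZMod 2) * (catalan (2 * n - i) : ZMod 2) with hf
  have hn : n ∈ Finset.range (2 * n + 1) := by simp; omega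
  rw [← Finset.add_sum_erase (Finset.range (2 * n + 1)) f hn]
  have hzero : ∑ x ∈ (Finset.range (2 * n + 1)).erase n, f x = 0 := by
    apply Finset.sum_involution (g := fun a _ => 2 * n - a)
    · intro a ha
      have h1 : a ≤ 2 * n ∧ a ≠ n := by
        simp only [Finset.mem_erase, Finset.mem_range] at ha; omega
      have h2 : 2 * n - (2 * n - a) = a := by omega
      have : f (2 * n - a) = f a := by simp only [hf, h2]; ring
      rw [this]
      have hx : ∀ x : ZMod 2, x + x = 0 := by decide
      exact hx _
    · intro a ha _
      simp only [Finset.mem_erase, Finset.mem_range] at ha; omega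
    · intro a ha
      simp only [Finset.mem_erase, Finset.mem_range] at ha ⊢; omega
    · intro a ha
      simp only [Finset.mem_erase, Finset.mem_range] at ha; omega
  rw [hzero, add_zero, hf]
  simp only [Nat.sub_self, show 2 * n - n = n by omega]
  have hx : ∀ x : ZMod 2, x * x = x := by decide
  exact hx _

private lemma catalanOdd (k : ℕ) : Odd (catalan (2 ^ k - 1)) := by
  induction k with
  | zero => simp [catalan_zero]
  | succ k ih =>
    have h1 : 1 ≤ 2 ^ k := Nat.one_le_two_pow
    have h2 : 2 ^ (k + 1) - 1 = 2 * (2 ^ k - 1) + 1 := by rw [pow_succ]; omega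
    rw [oddIffCast] at ih ⊢
    rw [h2, catalanParity]
    exact ih

private lemma oddChoose (j : ℕ) : ∀ t, t ≤ 2 ^ j - 1 → Odd (Nat.choose (2 ^ j - 1) t) := by
  induction j with
  | zero => intro t ht; interval_cases t; simp
  | succ j ih =>
    intro t ht
    haveI : Fact (Nat.Prime 2) := ⟨Nat.prime_two⟩
    have hl := Choose.choose_modEq_choose_mod_mul_choose_div_nat (p := 2) (n := 2 ^ (j + 1) - 1) (k := t)
    have hp : 2 ^ (j + 1) = 2 * 2 ^ j := by rw [pow_succ]; ring
    have h1 : 1 ≤ 2 ^ j := Nat.one_le_two_pow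
    have hmod : (2 ^ (j + 1) - 1) % 2 = 1 := by omega
    have hdiv : (2 ^ (j + 1) - 1) / 2 = 2 ^ j - 1 := by omega
    rw [hmod, hdiv] at hl
    have h3 : Nat.choose 1 (t % 2) = 1 := by
      rcases Nat.mod_two_eq_zero_or_one t with h | h <;> simp [h]
    rw [h3, one_mul] at hl
    have h4 : t / 2 ≤ 2 ^ j - 1 := by omega
    have hy := ih (t / 2) h4
    rw [Nat.odd_iff] at hy ⊢
    unfold Nat.ModEq at hl
    rw [hl]
    exact hy

theorem degree_rank_two_odd (M k : ℕ) (hM : M = 2 ^ k + 1) :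
    (∏ i ∈ Finset.range (M - 2), Nat.choose (2 + i) 2) ∣
      (∏ i ∈ Finset.range (M - 2), Nat.choose (M + i) 2) ∧
    Odd ((∏ i ∈ Finset.range (M - 2), Nat.choose (M + i) 2) /
      (∏ i ∈ Finset.range (M - 2), Nat.choose (2 + i) 2)) := by
  have hk1 : 1 ≤ 2 ^ k := Nat.one_le_two_pow
  set m := 2 ^ k - 1 with hmdef
  have hMm : M = m + 2 := by omega
  subst hMm
  simp only [Nat.add_sub_cancel]
  set A := ∏ i ∈ Finset.range m, Nat.choose (m + 2 + i) 2 with hA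
  set B := ∏ i ∈ Finset.range m, Nat.choose (2 + i) 2 with hB
  have hBpos : 0 < B := Finset.prod_pos fun i _ => Nat.choose_pos (by omega)
  set q1 := Nat.choose (m + m + 1) (m + 1) with hq1
  set q2 := catalan m with hq2
  have e1 := prodB m
  have e2 := prodA m m
  have e3 : q1 * (Nat.factorial (m + 1) * Nat.factorial m) = Nat.factorial (m + m + 1) := by
    have h := Nat.choose_mul_factorial_mul_factorial (show m + 1 ≤ m + m + 1 by omega)
    rw [show m + m + 1 - (m + 1) = m by omega] at h
    rw [hq1, ← h]; ring
  have e4 : q2 * (Nat.factorial (m + 1) * Nat.factorial m) = Nat.factorial (m + m) := by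
    have h := succ_mul_catalan_eq_centralBinom m
    have hc : Nat.choose (2 * m) m * Nat.factorial m * Nat.factorial m = Nat.factorial (2 * m) := by
      have := Nat.choose_mul_factorial_mul_factorial (show m ≤ 2 * m by omega)
      rwa [show 2 * m - m = m by omega] at this
    rw [Nat.centralBinom_eq_two_mul_choose] at h
    calc q2 * (Nat.factorial (m + 1) * Nat.factorial m)
        = ((m + 1) * q2) * Nat.factorial m * Nat.factorial m := by
          rw [Nat.factorial_succ]; ring
      _ = Nat.choose (2 * m) m * Nat.factorial m * Nat.factorial m := by rw [hq2, h]
      _ = Nat.factorial (2 * m) := hc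
      _ = Nat.factorial (m + m) := by rw [two_mul]
  have key : A = B * (q1 * q2) := by
    have hpos : 0 < 2 ^ m * (B * 2 ^ m) := by positivity
    refine Nat.eq_of_mul_eq_mul_right hpos ?_
    calc A * (2 ^ m * (B * 2 ^ m))
        = A * 2 ^ m * (B * 2 ^ m) := by ring
      _ = A * 2 ^ m * (Nat.factorial (m + 1) * Nat.factorial m) := by rw [e1]
      _ = Nat.factorial (m + m + 1) * Nat.factorial (m + m) := e2
      _ = (q1 * (Nat.factorial (m + 1) * Nat.factorial m)) *
            (q2 * (Nat.factorial (m + 1) * Nat.factorial m)) := by rw [e3, e4]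
      _ = (q1 * (B * 2 ^ m)) * (q2 * (B * 2 ^ m)) := by rw [e1]
      _ = B * (q1 * q2) * (2 ^ m * (B * 2 ^ m)) := by ring
  refine ⟨⟨q1 * q2, key⟩, ?_⟩
  rw [key, Nat.mul_div_cancel_left _ hBpos]
  have hoq1 : Odd q1 := by
    have : m + m + 1 = 2 ^ (k + 1) - 1 := by rw [pow_succ]; omega
    rw [hq1, this]
    exact oddChoose (k + 1) (m + 1) (by rw [pow_succ]; omega)
  exact hoq1.mul (catalanOdd k)
end

section
/- For an integer M ≥ 2, the integer d_{M,2} = ∏_{i=0}^{M−3} binom(M+i, 2) / binom(2+i, 2) is odd if and only if M = 2^k + 1 for some integer k ≥ 0. -/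
open Matrix Complex MvPolynomial Finset

section DegreeRankTwo
open Nat


-- digit sum lemmas base 2
lemma s2_two_mul (m : ℕ) : (Nat.digits 2 (2 * m)).sum = (Nat.digits 2 m).sum := by
  rcases Nat.eq_zero_or_pos m with h | h
  · simp [h]
  · rw [Nat.digits_def' (by norm_num : 1 < 2) (by omega)]
    simp [Nat.mul_div_cancel_left, Nat.mul_mod_right]

lemma s2_two_mul_add_one (m : ℕ) :
    (Nat.digits 2 (2 * m + 1)).sum = (Nat.digits 2 m).sum + 1 := by
  rw [Nat.digits_def' (by norm_num : 1 < 2) (by omega)]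
  have h1 : (2 * m + 1) % 2 = 1 := by omega
  have h2 : (2 * m + 1) / 2 = m := by omega
  rw [h1, h2]
  simp [add_comm]

lemma s2_pos (m : ℕ) (hm : 0 < m) : 0 < (Nat.digits 2 m).sum := by
  induction m using Nat.strong_induction_on with
  | _ m ih =>
    rcases Nat.even_or_odd m with ⟨j, hj⟩ | ⟨j, hj⟩
    · have hj' : m = 2 * j := by omega
      subst hj'
      rw [s2_two_mul]
      exact ih j (by omega) (by omega)
    · have hj' : m = 2 * j + 1 := by omega
      subst hj'
      rw [s2_two_mul_add_one]
      omega

lemma s2_pow (k : ℕ) : (Nat.digits 2 (2 ^ k)).sum = 1 := by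
  induction k with
  | zero => simp
  | succ k ih => rw [pow_succ, mul_comm, s2_two_mul]; exact ih

lemma s2_eq_one (m : ℕ) (hm : 0 < m) (h : (Nat.digits 2 m).sum = 1) : ∃ k, m = 2 ^ k := by
  induction m using Nat.strong_induction_on with
  | _ m ih =>
    rcases Nat.even_or_odd m with ⟨j, hj⟩ | ⟨j, hj⟩
    · have hj' : m = 2 * j := by omega
      subst hj'
      rw [s2_two_mul] at h
      obtain ⟨k, hk⟩ := ih j (by omega) (by omega) h
      exact ⟨k + 1, by rw [hk]; ring⟩
    · have hj' : m = 2 * j + 1 := by omega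
      subst hj'
      rw [s2_two_mul_add_one] at h
      have hj0 : j = 0 := by
        by_contra hj0
        have := s2_pos j (by omega)
        omega
      exact ⟨0, by omega⟩

lemma val_succ (n : ℕ) :
    padicValNat 2 (n + 1) + (Nat.digits 2 (n + 1)).sum = (Nat.digits 2 n).sum + 1 := by
  have h1 := sub_one_mul_padicValNat_factorial (p := 2) n
  have h2 := sub_one_mul_padicValNat_factorial (p := 2) (n + 1)
  have h3 : (n + 1)! = (n + 1) * n ! := rfl
  have h4 : padicValNat 2 ((n + 1) * n !) = padicValNat 2 (n + 1) + padicValNat 2 (n !) :=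
    padicValNat.mul (by omega) (Nat.factorial_ne_zero n)
  rw [h3, h4] at h2
  have h5 := Nat.digit_sum_le 2 n
  have h6 := Nat.digit_sum_le 2 (n + 1)
  have h7 := s2_pos (n + 1) (by omega)
  simp only [Nat.add_sub_cancel, Nat.reduceSub, one_mul] at h1 h2  -- (2-1) = 1
  omega

lemma val_choose_two_succ (n : ℕ) :
    padicValNat 2 (Nat.choose (2 * n + 1) n) + 1 = (Nat.digits 2 (n + 1)).sum := by
  have h := sub_one_mul_padicValNat_choose_eq_sub_sum_digits' (p := 2)
    (k := n) (n := n + 1)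
  have e : n + 1 + n = 2 * n + 1 := by ring
  rw [e] at h
  rw [s2_two_mul_add_one] at h
  have h7 := s2_pos (n + 1) (by omega)
  omega

lemma val_catalan (n : ℕ) :
    padicValNat 2 (catalan n) + 1 = (Nat.digits 2 (n + 1)).sum := by
  have hc := succ_mul_catalan_eq_centralBinom n
  have hcb : Nat.centralBinom n = Nat.choose (n + n) n := by
    rw [Nat.centralBinom, two_mul]
  have hv : padicValNat 2 ((n + 1) * catalan n) =
      padicValNat 2 (n + 1) + padicValNat 2 (catalan n) :=
    padicValNat.mul (by omega) (by
      intro h0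
      rw [h0, mul_zero] at hc
      exact Nat.centralBinom_ne_zero n hc.symm)
  have hk := sub_one_mul_padicValNat_choose_eq_sub_sum_digits' (p := 2)
    (k := n) (n := n)
  have e2 : n + n = 2 * n := by ring
  rw [e2, s2_two_mul] at hk
  rw [hc, hcb, e2] at hv
  have hs := val_succ n
  omega


lemma two_mul_choose_two (m : ℕ) : 2 * Nat.choose (m + 2) 2 = (m + 2) * (m + 1) := by
  have h2 : 2 ∣ (m + 2) * (m + 1) := by
    rcases Nat.even_or_odd m with ⟨j, hj⟩ | ⟨j, hj⟩
    · exact ⟨(j + 1) * (m + 1), by subst hj; ring⟩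
    · exact ⟨(m + 2) * (j + 1), by subst hj; ring⟩
  rw [Nat.choose_two_right]
  have e : m + 2 - 1 = m + 1 := rfl
  rw [e, Nat.mul_div_cancel' h2]

lemma fact_prod (a : ℕ) : ∀ k : ℕ, a ! * ∏ i ∈ range k, (a + 1 + i) = (a + k)!
  | 0 => by simp
  | k + 1 => by
    rw [prod_range_succ, ← mul_assoc, fact_prod a k]
    rw [show a + (k + 1) = (a + k) + 1 from rfl, Nat.factorial_succ]
    ring

lemma key_identity (n : ℕ) :
    (∏ i ∈ range n, Nat.choose (n + 2 + i) 2) =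
      (∏ i ∈ range n, Nat.choose (2 + i) 2) * (catalan n * Nat.choose (2 * n + 1) n) := by
  -- facts about factorials
  have hcat : catalan n * ((n + 1)! * n !) = (2 * n)! := by
    have hc := succ_mul_catalan_eq_centralBinom n
    have hcb : Nat.centralBinom n * (n ! * n !) = (2 * n)! := by
      have := Nat.choose_mul_factorial_mul_factorial (show n ≤ 2 * n by omega)
      rw [show 2 * n - n = n by omega] at this
      rw [Nat.centralBinom, ← this]; ring
    calc catalan n * ((n + 1)! * n !) = ((n + 1) * catalan n) * (n ! * n !) := by
          rw [Nat.factorial_succ]; ring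
      _ = (2 * n)! := by rw [hc, hcb]
  have hch : Nat.choose (2 * n + 1) n * (n ! * (n + 1)!) = (2 * n + 1)! := by
    have := Nat.choose_mul_factorial_mul_factorial (show n ≤ 2 * n + 1 by omega)
    rw [show 2 * n + 1 - n = n + 1 by omega] at this
    rw [← this]; ring
  -- products times 2^n
  have hp1 : 2 ^ n * ∏ i ∈ range n, Nat.choose (n + 2 + i) 2 =
      (∏ i ∈ range n, (n + 2 + i)) * (∏ i ∈ range n, (n + 1 + i)) := by
    calc 2 ^ n * ∏ i ∈ range n, Nat.choose (n + 2 + i) 2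
        = ∏ i ∈ range n, (2 * Nat.choose (n + 2 + i) 2) := by
          rw [prod_mul_distrib, prod_const, card_range]
      _ = ∏ i ∈ range n, ((n + 2 + i) * (n + 1 + i)) := by
          refine prod_congr rfl fun i _ => ?_
          rw [show n + 2 + i = (n + i) + 2 by ring, two_mul_choose_two]
          ring
      _ = (∏ i ∈ range n, (n + 2 + i)) * (∏ i ∈ range n, (n + 1 + i)) := prod_mul_distrib
  have hp2 : 2 ^ n * ∏ i ∈ range n, Nat.choose (2 + i) 2 = (n + 1)! * n ! := by
    have e1 : (∏ i ∈ range n, (2 + i)) = (n + 1)! := by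
      have := fact_prod 1 n
      simp only [Nat.factorial_one, one_mul] at this
      rw [show (1:ℕ) + 1 = 2 from rfl] at this
      rw [this, add_comm]
    have e0 : (∏ i ∈ range n, (1 + i)) = n ! := by
      have := fact_prod 0 n
      simp only [Nat.factorial_zero, one_mul, zero_add] at this
      rw [this]
    calc 2 ^ n * ∏ i ∈ range n, Nat.choose (2 + i) 2
        = ∏ i ∈ range n, (2 * Nat.choose (2 + i) 2) := by
          rw [prod_mul_distrib, prod_const, card_range]
      _ = ∏ i ∈ range n, ((2 + i) * (1 + i)) := by
          refine prod_congr rfl fun i _ => ?_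
          rw [show 2 + i = i + 2 by ring, two_mul_choose_two]
          ring
      _ = (∏ i ∈ range n, (2 + i)) * (∏ i ∈ range n, (1 + i)) := prod_mul_distrib
      _ = (n + 1)! * n ! := by rw [e1, e0]
  -- the ascending-product facts
  have e2 : n ! * ∏ i ∈ range n, (n + 1 + i) = (2 * n)! := by
    have := fact_prod n n
    rw [show n + n = 2 * n by ring] at this
    exact this
  have e3 : (n + 1)! * ∏ i ∈ range n, (n + 2 + i) = (2 * n + 1)! := by
    have := fact_prod (n + 1) n
    rw [show n + 1 + n = 2 * n + 1 by ring] at this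
    rw [← this]
  -- cancel 2^n
  have hpow : (0:ℕ) < 2 ^ n := Nat.pow_pos (by norm_num)
  apply Nat.eq_of_mul_eq_mul_left hpow
  rw [hp1, ← mul_assoc, hp2]
  -- now prove A = (n+1)! * n ! * D by cancelling n! * (n+1)!
  apply Nat.eq_of_mul_eq_mul_right (show 0 < n ! * (n + 1)! by positivity)
  calc (∏ i ∈ range n, (n + 2 + i)) * (∏ i ∈ range n, (n + 1 + i)) * (n ! * (n + 1)!)
      = (n ! * ∏ i ∈ range n, (n + 1 + i)) * ((n + 1)! * ∏ i ∈ range n, (n + 2 + i)) := by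
        ring
    _ = (2 * n)! * (2 * n + 1)! := by rw [e2, e3]
    _ = (catalan n * ((n + 1)! * n !)) * (Nat.choose (2 * n + 1) n * (n ! * (n + 1)!)) := by
        rw [hcat, hch]
    _ = (n + 1)! * n ! * (catalan n * Nat.choose (2 * n + 1) n) * (n ! * (n + 1)!) := by
        ring


lemma odd_iff_val0 {x : ℕ} (hx : x ≠ 0) : Odd x ↔ padicValNat 2 x = 0 := by
  rw [Nat.odd_iff, padicValNat.eq_zero_iff]
  constructor
  · intro h
    refine Or.inr (Or.inr ?_)
    rintro ⟨c, hc⟩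
    omega
  · rintro (h | h | h)
    · omega
    · omega
    · have h2 : x % 2 = 0 ∨ x % 2 = 1 := by omega
      rcases h2 with h2 | h2
      · exact absurd (Nat.dvd_of_mod_eq_zero h2) h
      · exact h2

theorem degree_rank_two_odd_iff (M : ℕ) (hM : 2 ≤ M) :
    Odd ((∏ i ∈ Finset.range (M - 2), Nat.choose (M + i) 2) /
        (∏ i ∈ Finset.range (M - 2), Nat.choose (2 + i) 2)) ↔
      ∃ k : ℕ, M = 2 ^ k + 1 := by
  obtain ⟨n, rfl⟩ : ∃ n, M = n + 2 := ⟨M - 2, by omega⟩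
  simp only [Nat.add_sub_cancel]
  have hP2 : 0 < ∏ i ∈ Finset.range n, Nat.choose (2 + i) 2 :=
    Finset.prod_pos fun i _ => Nat.choose_pos (by omega)
  rw [key_identity n, Nat.mul_div_cancel_left _ hP2]
  have hcat0 : catalan n ≠ 0 := by
    intro h
    have hc := succ_mul_catalan_eq_centralBinom n
    rw [h, mul_zero] at hc
    exact Nat.centralBinom_ne_zero n hc.symm
  have hch0 : Nat.choose (2 * n + 1) n ≠ 0 := (Nat.choose_pos (by omega)).ne'
  rw [odd_mul, odd_iff_val0 hcat0, odd_iff_val0 hch0]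
  have v1 := val_catalan n
  have v2 := val_choose_two_succ n
  constructor
  · rintro ⟨h1, h2⟩
    have hs : (Nat.digits 2 (n + 1)).sum = 1 := by omega
    obtain ⟨k, hk⟩ := s2_eq_one (n + 1) (by omega) hs
    exact ⟨k, by omega⟩
  · rintro ⟨k, hk⟩
    have hn1 : n + 1 = 2 ^ k := by omega
    have hs : (Nat.digits 2 (n + 1)).sum = 1 := by rw [hn1]; exact s2_pow k
    constructor <;> omega

end DegreeRankTwo
end

section
/- For any three vectors φ₁, φ₂, φ₃ ∈ ℂ², there exists a nonzero Hermitian matrix Q ∈ ℂ^{2×2} with φₙ* Q φₙ = 0 for n = 1, 2, 3 (where φₙ* denotes the conjugate-transpose of φₙ). Consequently, for M = 2 and N = 3 the intensity measurement map 𝒜_Φ is not injective on ℂ²/S¹ for any Φ = (φ₁, φ₂, φ₃). -/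
open Matrix Complex MvPolynomial Finset

/-- Auxiliary algebraic identity for the quadratic form of `U D U*`. -/
theorem quadform_aux (U : Matrix (Fin 2) (Fin 2) ℂ) (e : Fin 2 → ℝ) (x : Fin 2 → ℂ) :
    star x ⬝ᵥ (U * Matrix.diagonal (fun i => (e i : ℂ)) * star U) *ᵥ x =
      ∑ i, (e i : ℂ) *
        ((starRingEnd ℂ) ((star U *ᵥ x) i) * ((star U *ᵥ x) i)) := by
  simp only [Matrix.mulVec, dotProduct, Matrix.mul_apply, Matrix.diagonal_apply,
    Fin.sum_univ_two, Matrix.star_apply, Pi.star_apply, RCLike.star_def, Fin.isValue,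
    map_add, _root_.map_mul, Complex.conj_conj, Fin.reduceEq, if_true, if_false, reduceIte,
    Matrix.conjTranspose_apply]
  ring

/-- Quadratic form of a Hermitian matrix via its eigenvalues. -/
theorem quadform (Q : Matrix (Fin 2) (Fin 2) ℂ) (hQ : Q.IsHermitian) (x : Fin 2 → ℂ) :
    star x ⬝ᵥ Q *ᵥ x =
      ∑ i, (hQ.eigenvalues i : ℂ) *
        ((starRingEnd ℂ) ((star (hQ.eigenvectorUnitary : Matrix (Fin 2) (Fin 2) ℂ) *ᵥ x) i) *
          ((star (hQ.eigenvectorUnitary : Matrix (Fin 2) (Fin 2) ℂ) *ᵥ x) i)) := by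
  conv_lhs => rw [hQ.spectral_theorem]
  exact quadform_aux _ _ x

/-- The Hermitian matrix determined by four real parameters. -/
noncomputable def hermOf (v : Fin 4 → ℝ) : Matrix (Fin 2) (Fin 2) ℂ :=
  !![(v 0 : ℂ), (v 2 : ℂ) + (v 3 : ℂ) * Complex.I;
     (v 2 : ℂ) - (v 3 : ℂ) * Complex.I, (v 1 : ℂ)]

theorem hermOf_isHermitian (v : Fin 4 → ℝ) : (hermOf v).IsHermitian := by
  unfold Matrix.IsHermitian
  ext i j
  fin_cases i <;> fin_cases j <;>
    simp [hermOf, Matrix.conjTranspose_apply, Complex.ext_iff]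

theorem hermOf_ne_zero {v : Fin 4 → ℝ} (hv : v ≠ 0) : hermOf v ≠ 0 := by
  intro h
  apply hv
  have h00 := congrFun (congrFun h 0) 0
  have h01 := congrFun (congrFun h 0) 1
  have h11 := congrFun (congrFun h 1) 1
  simp [hermOf, Complex.ext_iff] at h00 h01 h11
  funext i
  fin_cases i <;> simp_all

/-- The real linear functional giving the (real) value of the quadratic form of `hermOf v`. -/
noncomputable def Lmap (φ : Fin 3 → Fin 2 → ℂ) : (Fin 4 → ℝ) →ₗ[ℝ] (Fin 3 → ℝ) where
  toFun v := fun n =>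
    v 0 * Complex.normSq (φ n 0) + v 1 * Complex.normSq (φ n 1) +
      v 2 * (2 * (φ n 0 * (starRingEnd ℂ) (φ n 1)).re) +
      v 3 * (2 * (φ n 0 * (starRingEnd ℂ) (φ n 1)).im)
  map_add' x y := by funext n; simp only [Pi.add_apply]; ring
  map_smul' c x := by funext n; simp only [Pi.smul_apply, smul_eq_mul, RingHom.id_apply]; ring

theorem quad_hermOf (φ : Fin 3 → Fin 2 → ℂ) (v : Fin 4 → ℝ) (n : Fin 3) :
    (fun m => (starRingEnd ℂ) (φ n m)) ⬝ᵥ (hermOf v) *ᵥ (φ n) = ((Lmap φ v n : ℝ) : ℂ) := by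
  simp only [Lmap, LinearMap.coe_mk, AddHom.coe_mk, hermOf, dotProduct, Matrix.mulVec,
    Fin.sum_univ_two, Matrix.cons_val', Matrix.cons_val_zero, Matrix.cons_val_one,
    Matrix.head_cons, Matrix.head_fin_const, Matrix.empty_val', Matrix.cons_val_fin_one]
  set p := φ n 0
  set q := φ n 1
  simp only [Complex.ext_iff, Matrix.of_apply, Matrix.cons_val', Matrix.cons_val_zero,
    Matrix.cons_val_one, Matrix.head_cons, Matrix.head_fin_const, Matrix.empty_val',
    Matrix.cons_val_fin_one, Complex.add_re, Complex.add_im, Complex.mul_re, Complex.mul_im,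
    Complex.sub_re, Complex.sub_im, Complex.ofReal_re, Complex.ofReal_im, Complex.I_re,
    Complex.I_im, Complex.conj_re, Complex.conj_im, Complex.normSq_apply]
  constructor <;> ring

theorem exists_kernel_vec (φ : Fin 3 → Fin 2 → ℂ) : ∃ v : Fin 4 → ℝ, v ≠ 0 ∧ Lmap φ v = 0 := by
  by_contra h
  push_neg at h
  have hinj : Function.Injective (Lmap φ) := by
    rw [← LinearMap.ker_eq_bot, LinearMap.ker_eq_bot']
    intro v hv
    by_contra hv0
    exact (h v hv0) hv
  have := LinearMap.finrank_le_finrank_of_injective hinj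
  simp [Module.finrank_pi] at this

theorem sum_conj_mul_smul (u w : Fin 2 → ℂ) (c : ℂ) :
    ∑ m, (starRingEnd ℂ) (u m) * (c * w m) = c * ∑ m, (starRingEnd ℂ) (u m) * w m := by
  rw [Finset.mul_sum]
  exact Finset.sum_congr rfl (by intros; ring)

theorem not_phase_injective (φ : Fin 3 → Fin 2 → ℂ) (Q : Matrix (Fin 2) (Fin 2) ℂ)
    (hQ0 : Q ≠ 0) (hQ : Q.IsHermitian)
    (hc : ∀ n : Fin 3, (fun m => (starRingEnd ℂ) (φ n m)) ⬝ᵥ Q *ᵥ (φ n) = 0) :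
    ¬ PhaseInjective φ := by
  set U : Matrix (Fin 2) (Fin 2) ℂ := (hQ.eigenvectorUnitary : Matrix (Fin 2) (Fin 2) ℂ) with hUdef
  set e : Fin 2 → ℝ := hQ.eigenvalues with hedef
  set a : Fin 3 → Fin 2 → ℝ := fun n i => Complex.normSq ((star U *ᵥ φ n) i) with hadef
  -- the constraints in terms of eigen-data
  have hcon : ∀ n, e 0 * a n 0 + e 1 * a n 1 = 0 := by
    intro n
    have h1 := quadform Q hQ (φ n)
    have h0 : star (φ n) ⬝ᵥ Q *ᵥ φ n = 0 := hc n
    rw [h0] at h1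
    simp only [Fin.sum_univ_two, ← Complex.normSq_eq_conj_mul_self] at h1
    have h2 : ((e 0 * a n 0 + e 1 * a n 1 : ℝ) : ℂ) = 0 := by
      push_cast
      rw [← h1]
    exact_mod_cast h2
  have ha_nonneg : ∀ n i, 0 ≤ a n i := fun n i => Complex.normSq_nonneg _
  -- orthonormal columns
  have hUU : star U * U = 1 := (Unitary.mem_iff.mp hQ.eigenvectorUnitary.2).1
  have horth : ∀ i j, (∑ m, (starRingEnd ℂ) (U m i) * U m j) = if i = j then 1 else 0 := by
    intro i j
    have h := congrFun (congrFun hUU i) j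
    simpa [Matrix.mul_apply, Matrix.one_apply, Matrix.conjTranspose_apply] using h
  -- intensity of a real multiple of a column
  have hint : ∀ (c : ℝ) (i : Fin 2) (n : Fin 3),
      intensity φ (fun m => (c : ℂ) * U m i) n = c ^ 2 * a n i := by
    intro c i n
    have hs : (∑ m, ((c : ℂ) * U m i) * (starRingEnd ℂ) (φ n m))
        = (c : ℂ) * (starRingEnd ℂ) ((star U *ᵥ φ n) i) := by
      simp only [Matrix.mulVec, dotProduct, Fin.sum_univ_two, Matrix.star_apply,
        Pi.star_apply, RCLike.star_def, map_add, _root_.map_mul, Complex.conj_conj,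
        Matrix.conjTranspose_apply]
      ring
    simp only [intensity, hs, norm_mul, Complex.norm_real, Complex.norm_conj, Real.norm_eq_abs,
      mul_pow, _root_.sq_abs, Complex.sq_norm, hadef]
  -- some eigenvalue is non-zero
  have hee : ∃ i, e i ≠ 0 := by
    by_contra h
    push_neg at h
    apply hQ0
    have hdiag : Matrix.diagonal (RCLike.ofReal ∘ e) = (0 : Matrix (Fin 2) (Fin 2) ℂ) := by
      ext i j
      by_cases hij : i = j <;> simp [Matrix.diagonal_apply, hij, h]
    rw [hQ.spectral_theorem, ← hedef, hdiag, map_zero]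
  intro hPI
  by_cases hmix : ∃ i j, 0 < e i ∧ e j < 0
  · -- mixed signs
    obtain ⟨i, j, hi, hj⟩ := hmix
    have hij : i ≠ j := by rintro rfl; linarith
    set x : Fin 2 → ℂ := fun m => ((Real.sqrt (e i) : ℝ) : ℂ) * U m i with hxdef
    set y : Fin 2 → ℂ := fun m => ((Real.sqrt (-(e j)) : ℝ) : ℂ) * U m j with hydef
    have hxy : intensity φ x = intensity φ y := by
      funext n
      rw [hxdef, hydef, hint, hint, Real.sq_sqrt hi.le, Real.sq_sqrt (by linarith)]
      have hpair : e i * a n i + e j * a n j = 0 := by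
        have hcn := hcon n
        have hi2 : i = 0 ∨ i = 1 := by omega
        have hj2 : j = 0 ∨ j = 1 := by omega
        rcases hi2 with rfl | rfl <;> rcases hj2 with rfl | rfl <;>
          first
            | exact absurd rfl hij
            | linarith
      linarith
    obtain ⟨θ, hθ⟩ := hPI x y hxy
    have hsum := congrArg (fun z : Fin 2 → ℂ => ∑ m, (starRingEnd ℂ) (U m i) * z m) hθ
    simp only [hxdef, hydef] at hsum
    rw [sum_conj_mul_smul, horth i i, if_pos rfl, mul_one] at hsum
    have hoij := horth i j
    rw [if_neg hij] at hoij
    have hrhs : (∑ m, (starRingEnd ℂ) (U m i) *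
        (Complex.exp (θ * Complex.I) * (((Real.sqrt (-(e j)) : ℝ) : ℂ) * U m j))) = 0 := by
      simp only [Fin.sum_univ_two] at hoij ⊢
      linear_combination (Complex.exp (θ * Complex.I) * ((Real.sqrt (-(e j)) : ℝ) : ℂ)) * hoij
    rw [hrhs] at hsum
    have : Real.sqrt (e i) = 0 := by exact_mod_cast hsum
    have := Real.sqrt_pos.mpr hi
    linarith
  · -- all eigenvalues of the same (weak) sign
    obtain ⟨i, hi⟩ := hee
    push_neg at hmix
    have hsame : ∀ k, 0 ≤ e i * e k := by
      intro k
      by_contra h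
      push_neg at h
      rcases mul_neg_iff.mp h with ⟨h1, h2⟩ | ⟨h1, h2⟩
      · linarith [hmix i k h1]
      · linarith [hmix k i h2]
    have hani : ∀ n, a n i = 0 := by
      intro n
      have hcn := hcon n
      have ha0 := ha_nonneg n 0
      have ha1 := ha_nonneg n 1
      have hii : 0 < e i * e i := mul_self_pos.mpr hi
      have hs0 := hsame 0
      have hs1 := hsame 1
      have hle : a n i ≤ 0 := by
        have hi2 : i = 0 ∨ i = 1 := by omega
        rcases hi2 with rfl | rfl
        · have h1 : e 0 * e 0 * a n 0 + e 0 * e 1 * a n 1 = 0 := by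
            linear_combination e 0 * hcn
          nlinarith [mul_nonneg hs1 ha1]
        · have h1 : e 1 * e 0 * a n 0 + e 1 * e 1 * a n 1 = 0 := by
            linear_combination e 1 * hcn
          nlinarith [mul_nonneg hs0 ha0]
      exact le_antisymm hle (ha_nonneg n i)
    set x : Fin 2 → ℂ := fun m => U m i with hxdef
    have hxy : intensity φ x = intensity φ (0 : Fin 2 → ℂ) := by
      funext n
      have hx1 : x = fun m => ((1 : ℝ) : ℂ) * U m i := by funext m; simp [hxdef]
      rw [hx1, hint, hani n]
      simp [intensity]
    obtain ⟨θ, hθ⟩ := hPI x 0 hxy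
    have hU0 : ∀ m, U m i = 0 := by
      intro m
      have := congrFun hθ m
      simpa [hxdef] using this
    have h1 := horth i i
    simp [hU0] at h1

theorem dim_two_three_vectors_not_injective (φ : Fin 3 → Fin 2 → ℂ) :
    (∃ Q : Matrix (Fin 2) (Fin 2) ℂ, Q ≠ 0 ∧ Q.IsHermitian ∧
        ∀ n : Fin 3, (fun m => (starRingEnd ℂ) (φ n m)) ⬝ᵥ Q *ᵥ (φ n) = 0) ∧
    ¬ PhaseInjective φ := by
  obtain ⟨v, hv, hLv⟩ := exists_kernel_vec φ
  have hcons : ∀ n : Fin 3, (fun m => (starRingEnd ℂ) (φ n m)) ⬝ᵥ (hermOf v) *ᵥ (φ n) = 0 := by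
    intro n
    rw [quad_hermOf]
    have := congrFun hLv n
    simp_all
  exact ⟨⟨hermOf v, hermOf_ne_zero hv, hermOf_isHermitian v, hcons⟩,
    not_phase_injective φ (hermOf v) (hermOf_ne_zero hv) (hermOf_isHermitian v) hcons⟩
end
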